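/- arXiv:2502.20149 — 5 statements merged into one kernel-verified Lean document; each statement's English description precedes it below -/
import Mathlib

section
/- Let ℓ > 0 and φ ∈ [0, π]. If there exists a realization x : ZMod 8 → EuclideanSpace ℝ (Fin 3) of the cyclooctane linkage with edge length ℓ and bond angle φ, then φ ≤ 3π/4. (Equivalently, for φ > 3π/4 the configuration space of the cyclooctane linkage is empty.) -/
open Real EuclideanGeometry

set_option maxHeartbeats 1000000

section AngleTriangle
open InnerProductGeometry RealInnerProductSpace

lemma angle_triangle_aux {V : Type*} [NormedAddCommGroup V] [InnerProductSpace ℝ V]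
    {x y z : V} (hx : x ≠ 0) (hy : y ≠ 0) (hz : z ≠ 0) :
    InnerProductGeometry.angle x z ≤
      InnerProductGeometry.angle x y + InnerProductGeometry.angle y z := by
  rcases le_or_gt π (InnerProductGeometry.angle x y + InnerProductGeometry.angle y z) with hab | hab
  · exact (InnerProductGeometry.angle_le_pi x z).trans hab
  have hry : (0:ℝ) < ‖y‖ := norm_pos_iff.mpr hy
  have hrx : (0:ℝ) < ‖x‖ := norm_pos_iff.mpr hx
  have hrz : (0:ℝ) < ‖z‖ := norm_pos_iff.mpr hz
  set x' := x - (⟪x, y⟫ / ‖y‖ ^ 2) • y with hx'def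
  set z' := z - (⟪z, y⟫ / ‖y‖ ^ 2) • y with hz'def
  have hip : ⟪y, y⟫ = ‖y‖ ^ 2 := real_inner_self_eq_norm_sq y
  have hx'sq : ‖x'‖ ^ 2 = ‖x‖ ^ 2 - ⟪x, y⟫ ^ 2 / ‖y‖ ^ 2 := by
    rw [← real_inner_self_eq_norm_sq, ← real_inner_self_eq_norm_sq, hx'def]
    simp only [inner_sub_left, inner_sub_right, real_inner_smul_left, real_inner_smul_right,
      real_inner_comm y x, hip]
    field_simp
    ring
  have hz'sq : ‖z'‖ ^ 2 = ‖z‖ ^ 2 - ⟪z, y⟫ ^ 2 / ‖y‖ ^ 2 := by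
    rw [← real_inner_self_eq_norm_sq, ← real_inner_self_eq_norm_sq, hz'def]
    simp only [inner_sub_left, inner_sub_right, real_inner_smul_left, real_inner_smul_right,
      real_inner_comm y z, hip]
    field_simp
    ring
  have hxz' : ⟪x', z'⟫ = ⟪x, z⟫ - ⟪x, y⟫ * ⟪z, y⟫ / ‖y‖ ^ 2 := by
    rw [hx'def, hz'def]
    simp only [inner_sub_left, inner_sub_right, real_inner_smul_left, real_inner_smul_right,
      real_inner_comm y x, real_inner_comm y z, hip]
    field_simp
    ring
  have e1 : Real.cos (InnerProductGeometry.angle x y) * (‖x‖ * ‖y‖) = ⟪x, y⟫ := cos_angle_mul_norm_mul_norm x y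
  have e2 : Real.cos (InnerProductGeometry.angle y z) * (‖y‖ * ‖z‖) = ⟪y, z⟫ := cos_angle_mul_norm_mul_norm y z
  have e3 : Real.sin (InnerProductGeometry.angle x y) * ‖x‖ = ‖x'‖ := by
    have h := sin_angle_mul_norm_mul_norm x y
    have hval : ⟪x, x⟫ * ⟪y, y⟫ - ⟪x, y⟫ * ⟪x, y⟫ = (‖x'‖ * ‖y‖) ^ 2 := by
      rw [real_inner_self_eq_norm_sq, hip, mul_pow, hx'sq]
      field_simp
    rw [hval, Real.sqrt_sq (by positivity)] at h
    exact mul_right_cancel₀ (ne_of_gt hry)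
      (by rw [← h]; ring)
  have e4 : Real.sin (InnerProductGeometry.angle y z) * ‖z‖ = ‖z'‖ := by
    have h := sin_angle_mul_norm_mul_norm y z
    have hval : ⟪y, y⟫ * ⟪z, z⟫ - ⟪y, z⟫ * ⟪y, z⟫ = (‖z'‖ * ‖y‖) ^ 2 := by
      rw [hip, real_inner_self_eq_norm_sq, mul_pow, hz'sq, real_inner_comm y z]
      field_simp
    rw [hval, Real.sqrt_sq (by positivity)] at h
    exact mul_right_cancel₀ (ne_of_gt hry)
      (by rw [← h]; ring)
  have hcs : -(‖x'‖ * ‖z'‖) ≤ ⟪x', z'⟫ := (abs_le.mp (abs_real_inner_le_norm x' z')).1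
  have key : ⟪x, y⟫ * ⟪z, y⟫ - ‖x'‖ * ‖z'‖ * ‖y‖ ^ 2 ≤ ⟪x, z⟫ * ‖y‖ ^ 2 := by
    have h2 : ⟪x', z'⟫ * ‖y‖ ^ 2 = ⟪x, z⟫ * ‖y‖ ^ 2 - ⟪x, y⟫ * ⟪z, y⟫ := by
      rw [hxz']; field_simp
    nlinarith [mul_le_mul_of_nonneg_right hcs (sq_nonneg ‖y‖)]
  have hcosadd : Real.cos (InnerProductGeometry.angle x y + InnerProductGeometry.angle y z) * (‖x‖ * ‖z‖) * ‖y‖ ^ 2 ≤ ⟪x, z⟫ * ‖y‖ ^ 2 := by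
    have expand : Real.cos (InnerProductGeometry.angle x y + InnerProductGeometry.angle y z) * (‖x‖ * ‖z‖) * ‖y‖ ^ 2 =
        (Real.cos (InnerProductGeometry.angle x y) * (‖x‖ * ‖y‖)) * (Real.cos (InnerProductGeometry.angle y z) * (‖y‖ * ‖z‖)) -
        (Real.sin (InnerProductGeometry.angle x y) * ‖x‖) * (Real.sin (InnerProductGeometry.angle y z) * ‖z‖) * ‖y‖ ^ 2 := by
      rw [Real.cos_add]; ring
    rw [expand, e1, e2, e3, e4]
    calc ⟪x, y⟫ * ⟪y, z⟫ - ‖x'‖ * ‖z'‖ * ‖y‖ ^ 2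
        = ⟪x, y⟫ * ⟪z, y⟫ - ‖x'‖ * ‖z'‖ * ‖y‖ ^ 2 := by rw [real_inner_comm y z]
      _ ≤ ⟪x, z⟫ * ‖y‖ ^ 2 := key
  have hc2 : Real.cos (InnerProductGeometry.angle x y + InnerProductGeometry.angle y z) * (‖x‖ * ‖z‖) ≤ ⟪x, z⟫ :=
    le_of_mul_le_mul_right hcosadd (by positivity)
  have hA : Real.cos (InnerProductGeometry.angle x z) * (‖x‖ * ‖z‖) = ⟪x, z⟫ := cos_angle_mul_norm_mul_norm x z
  have hc3 : Real.cos (InnerProductGeometry.angle x y + InnerProductGeometry.angle y z) ≤ Real.cos (InnerProductGeometry.angle x z) :=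
    le_of_mul_le_mul_right (hc2.trans_eq hA.symm) (by positivity)
  by_contra hlt
  push_neg at hlt
  have := Real.strictAntiOn_cos ⟨add_nonneg (InnerProductGeometry.angle_nonneg x y) (InnerProductGeometry.angle_nonneg y z), le_of_lt hab⟩
    ⟨InnerProductGeometry.angle_nonneg x z, InnerProductGeometry.angle_le_pi x z⟩ hlt
  linarith


end AngleTriangle

/-- A realization of the cyclooctane linkage with edge length `ℓ` and bond angle `φ`. -/
def IsCyclooctaneRealization (ℓ φ : ℝ) (x : ZMod 8 → EuclideanSpace ℝ (Fin 3)) : Prop :=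
  (∀ i : ZMod 8, dist (x i) (x (i + 1)) = ℓ) ∧
  (∀ i : ZMod 8, ∠ (x (i - 1)) (x i) (x (i + 1)) = φ)

theorem angle_le_of_exists_cyclooctaneRealization
    (ℓ φ : ℝ) (hℓ : 0 < ℓ) (hφ : φ ∈ Set.Icc 0 π)
    (h : ∃ x : ZMod 8 → EuclideanSpace ℝ (Fin 3), IsCyclooctaneRealization ℓ φ x) :
    φ ≤ 3 * π / 4 := by
  obtain ⟨x, hdist, hang⟩ := h
  by_contra hcon
  push_neg at hcon
  set t := π - φ with htdef
  have ht0 : 0 ≤ t := by rw [htdef]; linarith [hφ.2]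
  have ht4 : t < π / 4 := by rw [htdef]; linarith
  set u : ZMod 8 → EuclideanSpace ℝ (Fin 3) := fun i => x (i + 1) - x i with hudef
  have hnorm : ∀ i, ‖u i‖ = ℓ := by
    intro i
    simp only [hudef]
    rw [← dist_eq_norm, dist_comm]
    exact hdist i
  have hune : ∀ i, u i ≠ 0 := by
    intro i h0
    have := hnorm i
    rw [h0, norm_zero] at this
    linarith
  have hstep : ∀ i : ZMod 8, InnerProductGeometry.angle (u i) (u (i + 1)) = t := by
    intro i
    have h1 := hang (i + 1)
    have h2 : (i + 1 - 1 : ZMod 8) = i := by ring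
    rw [h2] at h1
    have h3 : ∠ (x i) (x (i + 1)) (x (i + 1 + 1)) =
        InnerProductGeometry.angle (x i - x (i + 1)) (x (i + 1 + 1) - x (i + 1)) := rfl
    have h4 : x i - x (i + 1) = -(u i) := by simp [hudef]
    rw [h3, h4, InnerProductGeometry.angle_neg_left] at h1
    have h5 : u (i + 1) = x (i + 1 + 1) - x (i + 1) := rfl
    rw [← h5] at h1
    rw [htdef]
    linarith
  have tri : ∀ i j k : ZMod 8, InnerProductGeometry.angle (u i) (u k) ≤
      InnerProductGeometry.angle (u i) (u j) + InnerProductGeometry.angle (u j) (u k) :=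
    fun i j k => angle_triangle_aux (hune i) (hune j) (hune k)
  -- step angles
  have s0 : InnerProductGeometry.angle (u 0) (u 1) = t := by
    have := hstep 0; rwa [show ((0:ZMod 8) + 1) = 1 by decide] at this
  have s1 : InnerProductGeometry.angle (u 1) (u 2) = t := by
    have := hstep 1; rwa [show ((1:ZMod 8) + 1) = 2 by decide] at this
  have s2 : InnerProductGeometry.angle (u 2) (u 3) = t := by
    have := hstep 2; rwa [show ((2:ZMod 8) + 1) = 3 by decide] at this
  have s3 : InnerProductGeometry.angle (u 3) (u 4) = t := by
    have := hstep 3; rwa [show ((3:ZMod 8) + 1) = 4 by decide] at this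
  have s5 : InnerProductGeometry.angle (u 5) (u 6) = t := by
    have := hstep 5; rwa [show ((5:ZMod 8) + 1) = 6 by decide] at this
  have s6 : InnerProductGeometry.angle (u 6) (u 7) = t := by
    have := hstep 6; rwa [show ((6:ZMod 8) + 1) = 7 by decide] at this
  have s7 : InnerProductGeometry.angle (u 7) (u 0) = t := by
    have := hstep 7; rwa [show ((7:ZMod 8) + 1) = 0 by decide] at this
  -- angle bounds from u 0
  have a1 : InnerProductGeometry.angle (u 0) (u 1) ≤ 1 * t := by rw [s0]; linarith
  have a2 : InnerProductGeometry.angle (u 0) (u 2) ≤ 2 * t := by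
    have := tri 0 1 2; rw [s0, s1] at this; linarith
  have a3 : InnerProductGeometry.angle (u 0) (u 3) ≤ 3 * t := by
    have := tri 0 2 3; rw [s2] at this; linarith
  have a4 : InnerProductGeometry.angle (u 0) (u 4) ≤ 4 * t := by
    have := tri 0 3 4; rw [s3] at this; linarith
  have a7 : InnerProductGeometry.angle (u 0) (u 7) ≤ 1 * t := by
    rw [InnerProductGeometry.angle_comm, s7]; linarith
  have a6 : InnerProductGeometry.angle (u 0) (u 6) ≤ 2 * t := by
    have := tri 0 7 6
    rw [InnerProductGeometry.angle_comm (u 7) (u 6), s6] at this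
    linarith
  have a5 : InnerProductGeometry.angle (u 0) (u 5) ≤ 3 * t := by
    have := tri 0 6 5
    rw [InnerProductGeometry.angle_comm (u 6) (u 5), s5] at this
    linarith
  -- inner products
  have hip : ∀ i : ZMod 8, (inner ℝ (u 0) (u i) : ℝ) =
      Real.cos (InnerProductGeometry.angle (u 0) (u i)) * (ℓ * ℓ) := by
    intro i
    have := InnerProductGeometry.cos_angle_mul_norm_mul_norm (u 0) (u i)
    rw [hnorm, hnorm] at this
    linarith
  have hl2 : (0:ℝ) < ℓ * ℓ := mul_pos hℓ hℓ
  have hpi : 4 * t ≤ π := by linarith [Real.pi_pos]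
  have hlow : ∀ i : ZMod 8, ∀ s : ℝ, InnerProductGeometry.angle (u 0) (u i) ≤ s → s ≤ π →
      Real.cos s * (ℓ * ℓ) ≤ (inner ℝ (u 0) (u i) : ℝ) := by
    intro i s hs hsπ
    rw [hip i]
    exact mul_le_mul_of_nonneg_right
      (Real.cos_le_cos_of_nonneg_of_le_pi (InnerProductGeometry.angle_nonneg _ _) hsπ hs)
      (le_of_lt hl2)
  have L0 : (inner ℝ (u 0) (u 0) : ℝ) = ℓ * ℓ := by
    rw [real_inner_self_eq_norm_mul_norm, hnorm]
  have L1 := hlow 1 (1 * t) a1 (by linarith)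
  have L2 := hlow 2 (2 * t) a2 (by linarith)
  have L3 := hlow 3 (3 * t) a3 (by linarith)
  have L4 := hlow 4 (4 * t) a4 (by linarith)
  have L5 := hlow 5 (3 * t) a5 (by linarith)
  have L6 := hlow 6 (2 * t) a6 (by linarith)
  have L7 := hlow 7 (1 * t) a7 (by linarith)
  -- the sum of the edge vectors is zero
  have hsum : ∑ i : ZMod 8, u i = 0 := by
    simp only [hudef]
    rw [Finset.sum_sub_distrib]
    rw [Fintype.sum_equiv (Equiv.addRight (1 : ZMod 8)) (fun i => x (i + 1)) x
      (fun i => rfl)]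
    simp
  have hsum_inner : ∑ i : ZMod 8, (inner ℝ (u 0) (u i) : ℝ) = 0 := by
    rw [← inner_sum, hsum, inner_zero_right]
  have hexpand : (inner ℝ (u 0) (u 0) : ℝ) + inner ℝ (u 0) (u 1) + inner ℝ (u 0) (u 2) +
      inner ℝ (u 0) (u 3) + inner ℝ (u 0) (u 4) + inner ℝ (u 0) (u 5) + inner ℝ (u 0) (u 6) +
      inner ℝ (u 0) (u 7) = 0 := by
    rw [← hsum_inner]
    have huniv : (Finset.univ : Finset (ZMod 8)) = {0, 1, 2, 3, 4, 5, 6, 7} := by decide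
    rw [huniv]
    simp +decide [Finset.sum_insert, Finset.mem_insert]
    ring
  -- trigonometry
  set c := Real.cos t with hcdef
  have hcle : Real.cos (π / 4) < c := by
    apply Real.strictAntiOn_cos ⟨ht0, by linarith⟩
      ⟨by positivity, by linarith [Real.pi_pos]⟩ ht4
  have hsqrt2 : Real.sqrt 2 ^ 2 = 2 := Real.sq_sqrt (by norm_num)
  have hsqrt2' : (0:ℝ) ≤ Real.sqrt 2 := Real.sqrt_nonneg 2
  have hc1 : Real.sqrt 2 / 2 < c := by rw [← Real.cos_pi_div_four]; exact hcle
  have hcpos : 0 < c := by nlinarith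
  have h2c : 1 < 2 * c ^ 2 := by nlinarith
  have e2t : Real.cos (2 * t) = 2 * c ^ 2 - 1 := Real.cos_two_mul t
  have e1t : Real.cos (1 * t) = c := by rw [one_mul]
  have e3t : Real.cos (3 * t) = 4 * c ^ 3 - 3 * c := Real.cos_three_mul t
  have e4t : Real.cos (4 * t) = 2 * (2 * c ^ 2 - 1) ^ 2 - 1 := by
    rw [show (4:ℝ) * t = 2 * (2 * t) by ring, Real.cos_two_mul, e2t]
  rw [e1t] at L1 L7
  rw [e2t] at L2 L6
  rw [e3t] at L3 L5
  rw [e4t] at L4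
  have hP : 0 < (ℓ * ℓ) * (4 * c * (c + 1) * (2 * c ^ 2 - 1)) := by
    apply mul_pos hl2
    apply mul_pos (mul_pos (by linarith) (by linarith))
    linarith
  have hbound : (ℓ * ℓ) * (4 * c * (c + 1) * (2 * c ^ 2 - 1)) ≤ 0 := by
    have hring : (ℓ * ℓ) * (4 * c * (c + 1) * (2 * c ^ 2 - 1)) =
        (ℓ * ℓ) + c * (ℓ * ℓ) + (2 * c ^ 2 - 1) * (ℓ * ℓ) +
        (4 * c ^ 3 - 3 * c) * (ℓ * ℓ) + (2 * (2 * c ^ 2 - 1) ^ 2 - 1) * (ℓ * ℓ) +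
        (4 * c ^ 3 - 3 * c) * (ℓ * ℓ) + (2 * c ^ 2 - 1) * (ℓ * ℓ) + c * (ℓ * ℓ) := by
      ring
    rw [hring]
    linarith [hexpand, L0, L1, L2, L3, L4, L5, L6, L7]
  linarith
end

section
/- Let ℓ > 0 and let x and y both be realizations of the cyclooctane linkage with edge length ℓ and bond angle φ = 3π/4. Then there exists an orientation-preserving affine isometry equivalence f of EuclideanSpace ℝ (Fin 3) such that y i = f (x i) for every i ∈ ZMod 8. (Hence for φ = 3π/4 the configuration space of the cyclooctane linkage consists of a single point, represented by the planar regular octagon.) -/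
open Real EuclideanGeometry RealInnerProductSpace

/-- An affine isometry equivalence of `EuclideanSpace ℝ (Fin 3)` is orientation-preserving
if its linear part has determinant `1`. -/
def OrientationPreserving
    (f : EuclideanSpace ℝ (Fin 3) ≃ᵃⁱ[ℝ] EuclideanSpace ℝ (Fin 3)) : Prop :=
  LinearMap.det f.linearIsometryEquiv.toLinearEquiv.toLinearMap = 1


lemma cyclo_sum8 {M : Type*} [AddCommMonoid M] (f : ZMod 8 → M) :
    ∑ i, f i = f 0 + f 1 + f 2 + f 3 + f 4 + f 5 + f 6 + f 7 := by
  show ∑ i : Fin 8, f i = _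
  exact Fin.sum_univ_eight f

lemma cyclo_keyT (s : ℝ) (h2 : s^2 = 2) (u : ZMod 8 → EuclideanSpace ℝ (Fin 3)) (t : Fin 3) :
    (s/4) * (∑ i : ZMod 8, (u (i+3) t + (1-s)*u (i+2) t + (1-s)*u (i+1) t + u i t)^2)
      + ((2-s)/8) * (∑ i : ZMod 8, (u (i+4) t - s*u (i+3) t + 2*u (i+2) t - s*u (i+1) t + u i t)^2)
    = s * (∑ i : ZMod 8, (u i t)^2) - 2 * (∑ i : ZMod 8, u i t * u (i+1) t)
      + ((2-s)/4) * (∑ i : ZMod 8, u i t)^2 := by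
  rw [cyclo_sum8, cyclo_sum8, cyclo_sum8, cyclo_sum8, cyclo_sum8]
  simp only [(show (((0:ZMod 8)+1)) = 1 by decide), (show (((0:ZMod 8)+2)) = 2 by decide), (show (((0:ZMod 8)+3)) = 3 by decide), (show (((0:ZMod 8)+4)) = 4 by decide), (show (((1:ZMod 8)+1)) = 2 by decide), (show (((1:ZMod 8)+2)) = 3 by decide), (show (((1:ZMod 8)+3)) = 4 by decide), (show (((1:ZMod 8)+4)) = 5 by decide), (show (((2:ZMod 8)+1)) = 3 by decide), (show (((2:ZMod 8)+2)) = 4 by decide), (show (((2:ZMod 8)+3)) = 5 by decide), (show (((2:ZMod 8)+4)) = 6 by decide), (show (((3:ZMod 8)+1)) = 4 by decide), (show (((3:ZMod 8)+2)) = 5 by decide), (show (((3:ZMod 8)+3)) = 6 by decide), (show (((3:ZMod 8)+4)) = 7 by decide), (show (((4:ZMod 8)+1)) = 5 by decide), (show (((4:ZMod 8)+2)) = 6 by decide), (show (((4:ZMod 8)+3)) = 7 by decide), (show (((4:ZMod 8)+4)) = 0 by decide), (show (((5:ZMod 8)+1)) = 6 by decide), (show (((5:ZMod 8)+2)) = 7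 by decide), (show (((5:ZMod 8)+3)) = 0 by decide), (show (((5:ZMod 8)+4)) = 1 by decide), (show (((6:ZMod 8)+1)) = 7 by decide), (show (((6:ZMod 8)+2)) = 0 by decide), (show (((6:ZMod 8)+3)) = 1 by decide), (show (((6:ZMod 8)+4)) = 2 by decide), (show (((7:ZMod 8)+1)) = 0 by decide), (show (((7:ZMod 8)+2)) = 1 by decide), (show (((7:ZMod 8)+3)) = 2 by decide), (show (((7:ZMod 8)+4)) = 3 by decide)]
  linear_combination ((-1/2*(u 0 t)*(u 0 t)) + (1/4*s*(u 0 t)*(u 0 t)) + (-1/2*(u 0 t)*(u 1 t)) + (1/2*s*(u 0 t)*(u 1 t)) + (-1/2*(u 0 t)*(u 2 t)) + (-1/4*s*(u 0 t)*(u 2 t)) + (1/2*(u 0 t)*(u 3 t)) + (1/2*(u 0 t)*(u 5 t)) + (-1/2*(u 0 t)*(u 6 t)) + (-1/4*s*(u 0 t)*(u 6 t)) + (-1/2*(u 0 t)*(u 7 t)) + (1/2*s*(u 0 t)*(u 7 t)) + (-1/2*(u 1 t)*(u 1 t)) + (1/4*s*(u 1 t)*(u 1 t)) + (-1/2*(u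 1 t)*(u 2 t)) + (1/2*s*(u 1 t)*(u 2 t)) + (-1/2*(u 1 t)*(u 3 t)) + (-1/4*s*(u 1 t)*(u 3 t)) + (1/2*(u 1 t)*(u 4 t)) + (1/2*(u 1 t)*(u 6 t)) + (-1/2*(u 1 t)*(u 7 t)) + (-1/4*s*(u 1 t)*(u 7 t)) + (-1/2*(u 2 t)*(u 2 t)) + (1/4*s*(u 2 t)*(u 2 t)) + (-1/2*(u 2 t)*(u 3 t)) + (1/2*s*(u 2 t)*(u 3 t)) + (-1/2*(u 2 t)*(u 4 t)) + (-1/4*s*(u 2 t)*(u 4 t)) + (1/2*(u 2 t)*(u 5 t)) + (1/2*(u 2 t)*(u 7 t)) + (-1/2*(u 3 t)*(u 3 t)) + (1/4*s*(u 3 t)*(u 3 t)) + (-1/2*(u 3 t)*(u 4 t)) + (1/2*s*(u 3 t)*(u 4 t)) + (-1/2*(u 3 t)*(u 5 t)) + (-1/4*s*(u 3 t)*(u 5 t)) + (1/2*(u 3 t)*(u 6 t)) + (-1/2*(u 4 t)*(u 4 t)) + (1/4*s*(u 4 t)*(u 4 t)) + (-1/2*(u 4 t)*(u 5 t)) + (1/2*s*(u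 4 t)*(u 5 t)) + (-1/2*(u 4 t)*(u 6 t)) + (-1/4*s*(u 4 t)*(u 6 t)) + (1/2*(u 4 t)*(u 7 t)) + (-1/2*(u 5 t)*(u 5 t)) + (1/4*s*(u 5 t)*(u 5 t)) + (-1/2*(u 5 t)*(u 6 t)) + (1/2*s*(u 5 t)*(u 6 t)) + (-1/2*(u 5 t)*(u 7 t)) + (-1/4*s*(u 5 t)*(u 7 t)) + (-1/2*(u 6 t)*(u 6 t)) + (1/4*s*(u 6 t)*(u 6 t)) + (-1/2*(u 6 t)*(u 7 t)) + (1/2*s*(u 6 t)*(u 7 t)) + (-1/2*(u 7 t)*(u 7 t)) + (1/4*s*(u 7 t)*(u 7 t))) * h2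

lemma cyclo_key_rec (s L : ℝ) (h2 : s^2 = 2) (hs : 0 < s) (u : ZMod 8 → EuclideanSpace ℝ (Fin 3))
    (hN : ∀ i : ZMod 8, ∑ t : Fin 3, (u i t)^2 = L^2)
    (hI : ∀ i : ZMod 8, ∑ t : Fin 3, u i t * u (i+1) t = s/2*L^2)
    (hS : ∀ t : Fin 3, ∑ i : ZMod 8, u i t = 0) :
    ∀ i : ZMod 8, u i + u (i+2) = s • u (i+1) := by
  have hslt : s < 2 := by nlinarith
  -- the two sums of squares
  set SA := ∑ t : Fin 3, ∑ i : ZMod 8,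
      (u (i+3) t + (1-s)*u (i+2) t + (1-s)*u (i+1) t + u i t)^2 with hSA
  set SB := ∑ t : Fin 3, ∑ i : ZMod 8,
      (u (i+4) t - s*u (i+3) t + 2*u (i+2) t - s*u (i+1) t + u i t)^2 with hSB
  have hmain : (s/4) * SA + ((2-s)/8) * SB = 0 := by
    have expand : (s/4) * SA + ((2-s)/8) * SB
        = ∑ t : Fin 3, ((s/4) * (∑ i : ZMod 8,
            (u (i+3) t + (1-s)*u (i+2) t + (1-s)*u (i+1) t + u i t)^2)
          + ((2-s)/8) * (∑ i : ZMod 8,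
            (u (i+4) t - s*u (i+3) t + 2*u (i+2) t - s*u (i+1) t + u i t)^2)) := by
      rw [hSA, hSB, Finset.mul_sum, Finset.mul_sum, ← Finset.sum_add_distrib]
    rw [expand]
    have : ∀ t : Fin 3, (s/4) * (∑ i : ZMod 8,
            (u (i+3) t + (1-s)*u (i+2) t + (1-s)*u (i+1) t + u i t)^2)
          + ((2-s)/8) * (∑ i : ZMod 8,
            (u (i+4) t - s*u (i+3) t + 2*u (i+2) t - s*u (i+1) t + u i t)^2)
        = s * (∑ i : ZMod 8, (u i t)^2) - 2 * (∑ i : ZMod 8, u i t * u (i+1) t)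
          + ((2-s)/4) * (∑ i : ZMod 8, u i t)^2 := fun t => cyclo_keyT s h2 u t
    rw [Finset.sum_congr rfl (fun t _ => this t)]
    have e1 : ∑ t : Fin 3, (s * (∑ i : ZMod 8, (u i t)^2) - 2 * (∑ i : ZMod 8, u i t * u (i+1) t)
          + ((2-s)/4) * (∑ i : ZMod 8, u i t)^2)
        = s * (∑ t : Fin 3, ∑ i : ZMod 8, (u i t)^2)
          - 2 * (∑ t : Fin 3, ∑ i : ZMod 8, u i t * u (i+1) t)
          + ((2-s)/4) * (∑ t : Fin 3, (∑ i : ZMod 8, u i t)^2) := by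
      rw [Finset.mul_sum, Finset.mul_sum, Finset.mul_sum, ← Finset.sum_sub_distrib,
        ← Finset.sum_add_distrib]
    rw [e1]
    rw [show (∑ t : Fin 3, ∑ i : ZMod 8, (u i t)^2) = ∑ i : ZMod 8, ∑ t : Fin 3, (u i t)^2
      from Finset.sum_comm]
    rw [show (∑ t : Fin 3, ∑ i : ZMod 8, u i t * u (i+1) t)
        = ∑ i : ZMod 8, ∑ t : Fin 3, u i t * u (i+1) t from Finset.sum_comm]
    have e2 : ∑ i : ZMod 8, ∑ t : Fin 3, (u i t)^2 = 8 * L^2 := by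
      rw [Finset.sum_congr rfl (fun i _ => hN i)]; simp
    have e3 : ∑ i : ZMod 8, ∑ t : Fin 3, u i t * u (i+1) t = 8 * (s/2*L^2) := by
      rw [Finset.sum_congr rfl (fun i _ => hI i)]; simp
    have e4 : ∑ t : Fin 3, (∑ i : ZMod 8, u i t)^2 = 0 := by
      rw [Finset.sum_congr rfl (fun t _ => by rw [hS t])]; simp
    rw [e2, e3, e4]; ring
  have hSA0 : 0 ≤ SA := Finset.sum_nonneg fun t _ => Finset.sum_nonneg fun i _ => sq_nonneg _
  have hSB0 : 0 ≤ SB := Finset.sum_nonneg fun t _ => Finset.sum_nonneg fun i _ => sq_nonneg _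
  have hA : SA = 0 := by nlinarith
  have hB : SB = 0 := by nlinarith
  have hAz : ∀ (i : ZMod 8) (t : Fin 3),
      u (i+3) t + (1-s)*u (i+2) t + (1-s)*u (i+1) t + u i t = 0 := by
    intro i t
    have h1 := (Finset.sum_eq_zero_iff_of_nonneg
      (fun t _ => Finset.sum_nonneg fun i _ => sq_nonneg _)).mp hA t (Finset.mem_univ t)
    have h2' := (Finset.sum_eq_zero_iff_of_nonneg
      (fun i _ => sq_nonneg _)).mp h1 i (Finset.mem_univ i)
    exact (pow_eq_zero_iff (two_ne_zero)).mp h2'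
  have hBz : ∀ (i : ZMod 8) (t : Fin 3),
      u (i+4) t - s*u (i+3) t + 2*u (i+2) t - s*u (i+1) t + u i t = 0 := by
    intro i t
    have h1 := (Finset.sum_eq_zero_iff_of_nonneg
      (fun t _ => Finset.sum_nonneg fun i _ => sq_nonneg _)).mp hB t (Finset.mem_univ t)
    have h2' := (Finset.sum_eq_zero_iff_of_nonneg
      (fun i _ => sq_nonneg _)).mp h1 i (Finset.mem_univ i)
    exact (pow_eq_zero_iff (two_ne_zero)).mp h2'
  intro i
  have hw : ∀ t : Fin 3, u i t + u (i+2) t = s * u (i+1) t := by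
    intro t
    have a1 := hAz i t
    have a2 := hAz (i+1) t
    rw [show i+1+3 = i+4 from by ring, show i+1+2 = i+3 from by ring,
        show i+1+1 = i+2 from by ring] at a2
    have b1 := hBz i t
    linear_combination (a1 - a2 + b1)/2
  ext t
  simp only [PiLp.add_apply, PiLp.smul_apply, smul_eq_mul]
  exact hw t

set_option maxHeartbeats 1000000 in
lemma cyclo_exists_frame (L : ℝ) (hL : 0 < L) (x : ZMod 8 → EuclideanSpace ℝ (Fin 3))
    (hd : ∀ i : ZMod 8, dist (x i) (x (i+1)) = L)
    (ha : ∀ i : ZMod 8, ∠ (x (i-1)) (x i) (x (i+1)) = 3*π/4) :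
    ∃ b : OrthonormalBasis (Fin 3) ℝ (EuclideanSpace ℝ (Fin 3)),
      (x 1 - x 0 = (L*1) • b 0 + (L*0) • b 1) ∧
      (x 2 - x 0 = (L*(1+Real.sqrt 2/2)) • b 0 + (L*(Real.sqrt 2/2)) • b 1) ∧
      (x 3 - x 0 = (L*(1+Real.sqrt 2/2)) • b 0 + (L*(1+Real.sqrt 2/2)) • b 1) ∧
      (x 4 - x 0 = (L*1) • b 0 + (L*(1+Real.sqrt 2)) • b 1) ∧
      (x 5 - x 0 = (L*0) • b 0 + (L*(1+Real.sqrt 2)) • b 1) ∧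
      (x 6 - x 0 = (L*(-(Real.sqrt 2/2))) • b 0 + (L*(1+Real.sqrt 2/2)) • b 1) ∧
      (x 7 - x 0 = (L*(-(Real.sqrt 2/2))) • b 0 + (L*(Real.sqrt 2/2)) • b 1) := by
  have hL' : L ≠ 0 := ne_of_gt hL
  set s : ℝ := Real.sqrt 2 with hsdef
  have h2 : s^2 = 2 := Real.sq_sqrt (by norm_num)
  have hs : 0 < s := Real.sqrt_pos.mpr (by norm_num)
  set u : ZMod 8 → EuclideanSpace ℝ (Fin 3) := fun i => x (i+1) - x i with hu
  have hnorm : ∀ i : ZMod 8, ‖u i‖ = L := by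
    intro i
    rw [hu]
    simp only
    rw [← dist_eq_norm, dist_comm]
    exact hd i
  have hinner : ∀ i : ZMod 8, ⟪u i, u (i+1)⟫ = s/2 * L^2 := by
    intro i
    have hang := ha (i+1)
    rw [show i+1-1 = i from by ring, show i+1+1 = i+2 from by ring] at hang
    have hcos := congrArg Real.cos hang
    rw [EuclideanGeometry.angle, InnerProductGeometry.cos_angle] at hcos
    simp only [vsub_eq_sub] at hcos
    have hc : Real.cos (3*π/4) = -(s/2) := by
      rw [show (3*π/4 : ℝ) = π - π/4 by ring, Real.cos_pi_sub, Real.cos_pi_div_four]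
    have e1 : x i - x (i+1) = -(u i) := by simp [hu]
    have e2 : x (i+2) - x (i+1) = u (i+1) := by
      simp only [hu]; rw [show i+1+1 = i+2 from by ring]
    rw [e1, e2, inner_neg_left, norm_neg, hnorm i, hnorm (i+1), hc] at hcos
    field_simp at hcos
    rw [PiLp.inner_apply] at hcos ⊢
    simp only [RCLike.inner_apply, conj_trivial] at hcos ⊢
    linear_combination -hcos / 2
  have hsum : ∑ i : ZMod 8, u i = 0 := by
    simp only [hu]
    rw [Finset.sum_sub_distrib, sub_eq_zero]
    exact Fintype.sum_equiv (Equiv.addRight (1:ZMod 8)) _ _ (fun i => rfl)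
  have hN : ∀ i : ZMod 8, ∑ t : Fin 3, (u i t)^2 = L^2 := by
    intro i
    have h := real_inner_self_eq_norm_sq (u i)
    rw [hnorm i, PiLp.inner_apply] at h
    simpa [RCLike.inner_apply, pow_two] using h
  have hI : ∀ i : ZMod 8, ∑ t : Fin 3, u i t * u (i+1) t = s/2*L^2 := by
    intro i
    have h := hinner i
    rw [PiLp.inner_apply] at h
    simpa [RCLike.inner_apply, mul_comm] using h
  have hS : ∀ t : Fin 3, ∑ i : ZMod 8, u i t = 0 := by
    intro t
    have h := congrArg (fun v : EuclideanSpace ℝ (Fin 3) => v t) hsum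
    simpa [Finset.sum_apply] using h
  have hrec := cyclo_key_rec s L h2 hs u hN hI hS
  set E1 : EuclideanSpace ℝ (Fin 3) := L⁻¹ • u 0 with hE1
  set E2 : EuclideanSpace ℝ (Fin 3) := (s*L⁻¹) • u 1 - L⁻¹ • u 0 with hE2
  have i00 : ⟪u 0, u 0⟫ = L^2 := by rw [real_inner_self_eq_norm_sq, hnorm 0]
  have i11 : ⟪u 1, u 1⟫ = L^2 := by rw [real_inner_self_eq_norm_sq, hnorm 1]
  have i01 : ⟪u 0, u 1⟫ = s/2*L^2 := by
    have h := hinner 0; rwa [show (0:ZMod 8)+1 = 1 from by decide] at h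
  have i10 : ⟪u 1, u 0⟫ = s/2*L^2 := by rw [real_inner_comm]; exact i01
  have n1 : ⟪E1, E1⟫ = 1 := by
    rw [hE1, real_inner_smul_left, real_inner_smul_right, i00]; field_simp
  have n2 : ⟪E2, E2⟫ = 1 := by
    rw [hE2]
    simp only [inner_sub_left, inner_sub_right, real_inner_smul_left,
      real_inner_smul_right, i00, i01, i10, i11]
    field_simp
    try ring_nf
    try simp only [h2]
    try ring
  have n12 : ⟪E1, E2⟫ = 0 := by
    rw [hE1, hE2]
    simp only [inner_sub_left, inner_sub_right, real_inner_smul_left,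
      real_inner_smul_right, i00, i01, i10, i11]
    field_simp
    try ring_nf
    try simp only [h2]
    try ring
  have n21 : ⟪E2, E1⟫ = 0 := by rw [real_inner_comm]; exact n12
  have hON : Orthonormal ℝ (({0,1} : Set (Fin 3)).restrict ![E1, E2, 0]) := by
    rw [orthonormal_iff_ite]
    rintro ⟨i, hi⟩ ⟨j, hj⟩
    simp only [Set.mem_insert_iff, Set.mem_singleton_iff] at hi hj
    rcases hi with rfl|rfl <;> rcases hj with rfl|rfl <;>
      simp [Set.restrict, Subtype.ext_iff, n1, n2, n12, n21,
        (by have := real_inner_self_eq_norm_sq E1; nlinarith [norm_nonneg E1] : ‖E1‖ = 1),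
        (by have := real_inner_self_eq_norm_sq E2; nlinarith [norm_nonneg E2] : ‖E2‖ = 1)]
  have card_eq : Module.finrank ℝ (EuclideanSpace ℝ (Fin 3)) = Fintype.card (Fin 3) := by simp
  obtain ⟨b, hb⟩ := hON.exists_orthonormalBasis_extension_of_card_eq card_eq
  have hb0 : b 0 = E1 := by have h := hb 0 (by simp); simpa using h
  have hb1 : b 1 = E2 := by have h := hb 1 (by simp); simpa using h
  have hu0 : u 0 = (L*1) • b 0 + (L*0) • b 1 := by
    rw [hb0, hb1, hE1, hE2]
    match_scalars <;> (try ring) <;>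
      (field_simp
       try ring_nf
       try simp only [h2]
       try ring)
  have hu1 : u 1 = (L*(s/2)) • b 0 + (L*(s/2)) • b 1 := by
    rw [hb0, hb1, hE1, hE2]
    match_scalars <;> (try ring) <;>
      (field_simp
       try ring_nf
       try simp only [h2]
       try ring)
  have hrec' : ∀ i : ZMod 8, u (i+2) = s • u (i+1) - u i := fun i =>
    eq_sub_of_add_eq' (hrec i)
  have hu2 : u 2 = (L*0) • b 0 + (L*1) • b 1 := by
    have h := hrec' 0
    rw [show (0:ZMod 8)+2 = 2 from by decide, show (0:ZMod 8)+1 = 1 from by decide] at h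
    rw [h, hu1, hu0]
    match_scalars <;> (try ring) <;>
      (field_simp
       try ring_nf
       try simp only [h2]
       try ring)
  have hu3 : u 3 = (L*(-(s/2))) • b 0 + (L*(s/2)) • b 1 := by
    have h := hrec' 1
    rw [show (1:ZMod 8)+2 = 3 from by decide, show (1:ZMod 8)+1 = 2 from by decide] at h
    rw [h, hu2, hu1]
    match_scalars <;> (try ring) <;>
      (field_simp
       try ring_nf
       try simp only [h2]
       try ring)
  have hu4 : u 4 = (L*(-1)) • b 0 + (L*0) • b 1 := by
    have h := hrec' 2
    rw [show (2:ZMod 8)+2 = 4 from by decide, show (2:ZMod 8)+1 = 3 from by decide] at h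
    rw [h, hu3, hu2]
    match_scalars <;> (try ring) <;>
      (field_simp
       try ring_nf
       try simp only [h2]
       try ring)
  have hu5 : u 5 = (L*(-(s/2))) • b 0 + (L*(-(s/2))) • b 1 := by
    have h := hrec' 3
    rw [show (3:ZMod 8)+2 = 5 from by decide, show (3:ZMod 8)+1 = 4 from by decide] at h
    rw [h, hu4, hu3]
    match_scalars <;> (try ring) <;>
      (field_simp
       try ring_nf
       try simp only [h2]
       try ring)
  have hu6 : u 6 = (L*0) • b 0 + (L*(-1)) • b 1 := by
    have h := hrec' 4
    rw [show (4:ZMod 8)+2 = 6 from by decide, show (4:ZMod 8)+1 = 5 from by decide] at h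
    rw [h, hu5, hu4]
    match_scalars <;> (try ring) <;>
      (field_simp
       try ring_nf
       try simp only [h2]
       try ring)
  have T : ∀ k : ZMod 8, x (k+1) - x 0 = u k + (x k - x 0) := by
    intro k
    simp only [hu]
    abel
  have X1 : x 1 - x 0 = (L*1) • b 0 + (L*0) • b 1 := by
    rw [show (1:ZMod 8) = 0+1 from by decide, T 0, sub_self, add_zero, hu0]
  have X2 : x 2 - x 0 = (L*(1+s/2)) • b 0 + (L*(s/2)) • b 1 := by
    rw [show (2:ZMod 8) = 1+1 from by decide, T 1, X1, hu1]
    module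
  have X3 : x 3 - x 0 = (L*(1+s/2)) • b 0 + (L*(1+s/2)) • b 1 := by
    rw [show (3:ZMod 8) = 2+1 from by decide, T 2, X2, hu2]
    module
  have X4 : x 4 - x 0 = (L*1) • b 0 + (L*(1+s)) • b 1 := by
    rw [show (4:ZMod 8) = 3+1 from by decide, T 3, X3, hu3]
    module
  have X5 : x 5 - x 0 = (L*0) • b 0 + (L*(1+s)) • b 1 := by
    rw [show (5:ZMod 8) = 4+1 from by decide, T 4, X4, hu4]
    module
  have X6 : x 6 - x 0 = (L*(-(s/2))) • b 0 + (L*(1+s/2)) • b 1 := by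
    rw [show (6:ZMod 8) = 5+1 from by decide, T 5, X5, hu5]
    module
  have X7 : x 7 - x 0 = (L*(-(s/2))) • b 0 + (L*(s/2)) • b 1 := by
    rw [show (7:ZMod 8) = 6+1 from by decide, T 6, X6, hu6]
    module
  exact ⟨b, X1, X2, X3, X4, X5, X6, X7⟩

theorem cyclooctane_config_space_subsingleton_at_maximal_angle
    (ℓ : ℝ) (hℓ : 0 < ℓ)
    (x y : ZMod 8 → EuclideanSpace ℝ (Fin 3))
    (hx : IsCyclooctaneRealization ℓ (3 * π / 4) x)
    (hy : IsCyclooctaneRealization ℓ (3 * π / 4) y) :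
    ∃ f : EuclideanSpace ℝ (Fin 3) ≃ᵃⁱ[ℝ] EuclideanSpace ℝ (Fin 3),
      OrientationPreserving f ∧ ∀ i : ZMod 8, y i = f (x i) := by
  obtain ⟨bX, hX1, hX2, hX3, hX4, hX5, hX6, hX7⟩ :=
    cyclo_exists_frame ℓ hℓ x (fun i => hx.1 i) (fun i => hx.2 i)
  obtain ⟨bY, hY1, hY2, hY3, hY4, hY5, hY6, hY7⟩ :=
    cyclo_exists_frame ℓ hℓ y (fun i => hy.1 i) (fun i => hy.2 i)
  -- determinant sign
  set d : ℝ := bX.toBasis.det (⇑bY.toBasis) with hd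
  have hd1 : d = 1 ∨ d = -1 := bX.det_to_matrix_orthonormalBasis_real bY
  have hdd : d * d = 1 := by rcases hd1 with h | h <;> rw [h] <;> norm_num
  set dε : ℝˣ := if h : d = 1 then 1 else -1 with hdε
  have hdεc : (dε : ℝ) = d := by
    rcases hd1 with h | h
    · rw [hdε]; rw [dif_pos h, h]; norm_num
    · rw [hdε]; rw [dif_neg (by rw [h]; norm_num), h]; norm_num
  set c : Fin 3 → ℝˣ := ![1, 1, dε] with hc
  set v' : Module.Basis (Fin 3) ℝ (EuclideanSpace ℝ (Fin 3)) := bY.toBasis.unitsSMul c with hv'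
  have hv'app : ∀ i, v' i = (c i : ℝ) • bY i := by
    intro i
    rw [hv', Module.Basis.unitsSMul_apply, OrthonormalBasis.coe_toBasis, Units.smul_def]
  have hc2 : ∀ i, (c i : ℝ) * (c i : ℝ) = 1 := by
    intro i
    fin_cases i <;> simp [hc, hdεc] <;> exact hdd
  have hON' : Orthonormal ℝ ⇑v' := by
    rw [orthonormal_iff_ite]
    intro i j
    rw [hv'app i, hv'app j, real_inner_smul_left, real_inner_smul_right]
    rw [orthonormal_iff_ite.mp bY.orthonormal i j]
    by_cases h : i = j
    · subst h; simp [hc2 i]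
    · simp [h]
  have hONX : Orthonormal ℝ ⇑bX.toBasis := by
    rw [OrthonormalBasis.coe_toBasis]; exact bX.orthonormal
  set Lin := hONX.equiv hON' (Equiv.refl (Fin 3)) with hLin
  have hLb : ∀ i, Lin (bX i) = (c i : ℝ) • bY i := by
    intro i
    have h := hONX.equiv_apply hON' (Equiv.refl (Fin 3)) i
    rw [OrthonormalBasis.coe_toBasis] at h
    rw [hLin, h, Equiv.refl_apply, hv'app i]
  have hL0 : Lin (bX 0) = bY 0 := by
    rw [hLb 0]; norm_num [hc]
  have hL1 : Lin (bX 1) = bY 1 := by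
    rw [hLb 1]; norm_num [hc]
  have hdet : LinearMap.det (Lin.toLinearEquiv.toLinearMap) = 1 := by
    have hb := Module.Basis.det_comp_basis bX.toBasis bX.toBasis Lin.toLinearEquiv.toLinearMap
    rw [Module.Basis.equiv_refl] at hb
    have hcomp : (⇑Lin.toLinearEquiv.toLinearMap ∘ ⇑bX.toBasis) = ⇑v' := by
      funext i
      have : Lin (bX.toBasis i) = v' i := by
        rw [OrthonormalBasis.coe_toBasis, hLb i, hv'app i]
      simpa using this
    rw [hcomp] at hb
    have hsm := (bX.toBasis.det).toMultilinearMap.map_smul_univ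
      (fun i => (c i : ℝ)) (⇑bY.toBasis)
    have hv'fun : ⇑v' = fun i => (c i : ℝ) • bY.toBasis i := by
      funext i
      rw [hv'app i, OrthonormalBasis.coe_toBasis]
    have hprod : (∏ i, (c i : ℝ)) = d := by
      rw [Fin.prod_univ_three]
      norm_num [hc, hdεc, Matrix.cons_val_two, Matrix.tail_cons, Matrix.head_cons]
    have : bX.toBasis.det ⇑v' = d * d := by
      rw [hv'fun]
      have : bX.toBasis.det (fun i => (c i : ℝ) • bY.toBasis i)
          = (∏ i, (c i : ℝ)) • bX.toBasis.det ⇑bY.toBasis := hsm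
      rw [this, hprod, smul_eq_mul, ← hd]
    rw [this, hdd] at hb
    simpa using hb.symm
  set F : EuclideanSpace ℝ (Fin 3) ≃ᵃⁱ[ℝ] EuclideanSpace ℝ (Fin 3) :=
    AffineIsometryEquiv.mk' (fun p => Lin (p - x 0) + y 0) Lin (x 0)
      (fun p => by simp [vsub_eq_sub, vadd_eq_add]) with hF
  have hFap : ∀ p, F p = Lin (p - x 0) + y 0 := fun p => rfl
  refine ⟨F, ?_, ?_⟩
  · show OrientationPreserving F
    rw [OrientationPreserving, hF, AffineIsometryEquiv.linearIsometryEquiv_mk']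
    exact hdet
  · intro i
    fin_cases i
    · rw [hFap]
      show y (0:ZMod 8) = Lin (x (0:ZMod 8) - x 0) + y 0
      simp
    · rw [hFap]
      show y (1:ZMod 8) = Lin (x (1:ZMod 8) - x 0) + y 0
      rw [hX1, map_add, map_smul, map_smul, hL0, hL1, ← hY1]; abel
    · rw [hFap]
      show y (2:ZMod 8) = Lin (x (2:ZMod 8) - x 0) + y 0
      rw [hX2, map_add, map_smul, map_smul, hL0, hL1, ← hY2]; abel
    · rw [hFap]
      show y (3:ZMod 8) = Lin (x (3:ZMod 8) - x 0) + y 0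
      rw [hX3, map_add, map_smul, map_smul, hL0, hL1, ← hY3]; abel
    · rw [hFap]
      show y (4:ZMod 8) = Lin (x (4:ZMod 8) - x 0) + y 0
      rw [hX4, map_add, map_smul, map_smul, hL0, hL1, ← hY4]; abel
    · rw [hFap]
      show y (5:ZMod 8) = Lin (x (5:ZMod 8) - x 0) + y 0
      rw [hX5, map_add, map_smul, map_smul, hL0, hL1, ← hY5]; abel
    · rw [hFap]
      show y (6:ZMod 8) = Lin (x (6:ZMod 8) - x 0) + y 0
      rw [hX6, map_add, map_smul, map_smul, hL0, hL1, ← hY6]; abel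
    · rw [hFap]
      show y (7:ZMod 8) = Lin (x (7:ZMod 8) - x 0) + y 0
      rw [hX7, map_add, map_smul, map_smul, hL0, hL1, ← hY7]; abel
end

section
/- Let x : ZMod 8 → EuclideanSpace ℝ (Fin 3) be a realization of the cyclooctane linkage with edge length ℓ > 0 and bond angle φ = 3π/4. Then the points x i, i ∈ ZMod 8, are coplanar, i.e. Coplanar ℝ (Set.range x). -/
open Real EuclideanGeometry RealInnerProductSpace

section Aux

variable {E : Type*} [NormedAddCommGroup E] [InnerProductSpace ℝ E]

private lemma expand2' (a b : E) :
    ⟪a + b, a + b⟫ = ⟪a, a⟫ + ⟪b, b⟫ + 2*⟪a, b⟫ := by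
  simp only [inner_add_left, inner_add_right, real_inner_comm b a]
  ring

private lemma expand3' (a b d : E) (t : ℝ) :
    ⟪a + t • b + d, a + t • b + d⟫ =
      ⟪a, a⟫ + t^2*⟪b, b⟫ + ⟪d, d⟫ + 2*t*⟪a, b⟫ + 2*t*⟪b, d⟫ + 2*⟪a, d⟫ := by
  simp only [inner_add_left, inner_add_right, real_inner_smul_left, real_inner_smul_right,
    real_inner_comm b a, real_inner_comm d a, real_inner_comm d b]
  ring

private lemma expand4' (a b d e : E) (t : ℝ) :
    ⟪a + t • (b + d) + e, a + t • (b + d) + e⟫ =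
      ⟪a, a⟫ + ⟪e, e⟫ + t^2*(⟪b, b⟫ + ⟪d, d⟫ + 2*⟪b, d⟫)
        + 2*t*(⟪a, b⟫ + ⟪a, d⟫ + ⟪b, e⟫ + ⟪d, e⟫) + 2*⟪a, e⟫ := by
  simp only [inner_add_left, inner_add_right, real_inner_smul_left, real_inner_smul_right,
    real_inner_comm b a, real_inner_comm d a, real_inner_comm d b, real_inner_comm e a,
    real_inner_comm e b, real_inner_comm e d]
  ring

private lemma expand8' (a0 a1 a2 a3 a4 a5 a6 a7 : E) :
    ⟪a0 + a1 + a2 + a3 + a4 + a5 + a6 + a7, a0 + a1 + a2 + a3 + a4 + a5 + a6 + a7⟫ =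
      (⟪a0, a0⟫ + ⟪a1, a1⟫ + ⟪a2, a2⟫ + ⟪a3, a3⟫ + ⟪a4, a4⟫ + ⟪a5, a5⟫ + ⟪a6, a6⟫ + ⟪a7, a7⟫) + 2*(⟪a0, a1⟫ + ⟪a0, a7⟫ + ⟪a1, a2⟫ + ⟪a2, a3⟫ + ⟪a3, a4⟫ + ⟪a4, a5⟫ + ⟪a5, a6⟫ + ⟪a6, a7⟫) + 2*(⟪a0, a2⟫ + ⟪a0, a6⟫ + ⟪a1, a3⟫ + ⟪a1, a7⟫ + ⟪a2, a4⟫ + ⟪a3, a5⟫ + ⟪a4, a6⟫ + ⟪a5, a7⟫) + 2*(⟪a0, a3⟫ + ⟪a0, a5⟫ + ⟪a1, a4⟫ + ⟪a1, a6⟫ + ⟪a2, a5⟫ + ⟪a2, a7⟫ + ⟪a3, a6⟫ + ⟪a4, a7⟫) + 2*(⟪a0, a4⟫ + ⟪a1, a5⟫ + ⟪a2, a6⟫ + ⟪a3, a7⟫) := by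
  simp only [inner_add_left, inner_add_right, real_inner_comm a1 a0, real_inner_comm a2 a0, real_inner_comm a3 a0, real_inner_comm a4 a0, real_inner_comm a5 a0, real_inner_comm a6 a0, real_inner_comm a7 a0, real_inner_comm a2 a1, real_inner_comm a3 a1, real_inner_comm a4 a1, real_inner_comm a5 a1, real_inner_comm a6 a1, real_inner_comm a7 a1, real_inner_comm a3 a2, real_inner_comm a4 a2, real_inner_comm a5 a2, real_inner_comm a6 a2, real_inner_comm a7 a2, real_inner_comm a4 a3, real_inner_comm a5 a3, real_inner_comm a6 a3, real_inner_comm a7 a3, real_inner_comm a5 a4, real_inner_comm a6 a4, real_inner_comm a7 a4, real_inner_comm a6 a5, real_inner_comm a7 a5, real_inner_comm a7 a6]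
  ring


end Aux

set_option maxHeartbeats 2000000

theorem cyclooctaneRealization_coplanar_at_maximal_angle
    (ℓ : ℝ) (hℓ : 0 < ℓ)
    (x : ZMod 8 → EuclideanSpace ℝ (Fin 3))
    (hx : IsCyclooctaneRealization ℓ (3 * π / 4) x) :
    Coplanar ℝ (Set.range x) := by
  obtain ⟨hd, ha⟩ := hx
  have e1 : Real.sqrt 2 * Real.sqrt 2 = 2 := Real.mul_self_sqrt (by norm_num)
  have h1s : (1:ℝ) ≤ Real.sqrt 2 := by nlinarith [Real.sqrt_nonneg 2]
  set v : ZMod 8 → EuclideanSpace ℝ (Fin 3) := fun i => x (i+1) - x i with hvdef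
  -- squared norms of edge vectors
  have hn : ∀ i, ⟪v i, v i⟫ = ℓ^2 := by
    intro i
    rw [real_inner_self_eq_norm_sq]
    have : ‖v i‖ = ℓ := by
      show ‖x (i+1) - x i‖ = ℓ
      rw [← dist_eq_norm, dist_comm]
      exact hd i
    rw [this]
  -- adjacent inner products
  have hadj : ∀ i, ⟪v i, v (i+1)⟫ = Real.sqrt 2/2 * ℓ^2 := by
    intro i
    have h := ha (i+1)
    rw [show i+1-1 = i from by ring] at h
    have hc : Real.cos (3 * π / 4) = -(Real.sqrt 2/2) := by
      rw [show 3 * π / 4 = π - π/4 by ring, Real.cos_pi_sub, Real.cos_pi_div_four]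
    have key := InnerProductGeometry.cos_angle_mul_norm_mul_norm
      (x i -ᵥ x (i+1)) (x (i+1+1) -ᵥ x (i+1))
    rw [show InnerProductGeometry.angle (x i -ᵥ x (i+1)) (x (i+1+1) -ᵥ x (i+1))
        = ∠ (x i) (x (i+1)) (x (i+1+1)) from rfl, h, hc] at key
    have n1 : ‖x i -ᵥ x (i+1)‖ = ℓ := by rw [← dist_eq_norm_vsub]; exact hd i
    have n2 : ‖x (i+1+1) -ᵥ x (i+1)‖ = ℓ := by rw [← dist_eq_norm_vsub, dist_comm]; exact hd (i+1)
    rw [n1, n2] at key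
    have hv1 : v i = -(x i -ᵥ x (i+1)) := by
      show x (i+1) - x i = _
      simp [vsub_eq_sub]
    have hv2 : v (i+1) = x (i+1+1) -ᵥ x (i+1) := rfl
    rw [hv1, hv2, inner_neg_left, ← key]
    ring
  have hadj1 : ∀ i, ⟪v (i+1), v (i+2)⟫ = Real.sqrt 2/2 * ℓ^2 := fun i => by
    have := hadj (i+1); rwa [show i+1+1 = i+2 from by ring] at this
  have hadj2 : ∀ i, ⟪v (i+2), v (i+3)⟫ = Real.sqrt 2/2 * ℓ^2 := fun i => by
    have := hadj (i+2); rwa [show i+2+1 = i+3 from by ring] at this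
  -- the w-vector identity
  have hW : ∀ i, ⟪v i + (-Real.sqrt 2) • v (i+1) + v (i+2),
      v i + (-Real.sqrt 2) • v (i+1) + v (i+2)⟫ = 2 * ⟪v i, v (i+2)⟫ := by
    intro i
    rw [expand3', hn i, hn (i+1), hn (i+2), hadj i, hadj1 i]
    linear_combination (-(ℓ^2)) * e1
  have hp : ∀ i, 0 ≤ ⟪v i, v (i+2)⟫ := by
    intro i
    have h0 := real_inner_self_nonneg
      (x := v i + (-Real.sqrt 2) • v (i+1) + v (i+2))
    rw [hW i] at h0
    linarith
  -- the z-vector identity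
  have hZ : ∀ i, ⟪v i + (1-Real.sqrt 2) • (v (i+1) + v (i+2)) + v (i+3),
      v i + (1-Real.sqrt 2) • (v (i+1) + v (i+2)) + v (i+3)⟫ =
      Real.sqrt 2*ℓ^2 + 2*⟪v i, v (i+3)⟫
        + 2*(1-Real.sqrt 2)*(⟪v i, v (i+2)⟫ + ⟪v (i+1), v (i+3)⟫) := by
    intro i
    rw [expand4', hn i, hn (i+1), hn (i+2), hn (i+3), hadj i, hadj1 i, hadj2 i]
    linear_combination ((Real.sqrt 2 - 2)*ℓ^2) * e1
  have hr : ∀ i, -(Real.sqrt 2/2*ℓ^2) ≤ ⟪v i, v (i+3)⟫ := by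
    intro i
    have h0 := real_inner_self_nonneg
      (x := v i + (1-Real.sqrt 2) • (v (i+1) + v (i+2)) + v (i+3))
    rw [hZ i] at h0
    have hq := hp (i+1)
    rw [show i+1+2 = i+3 from by ring] at hq
    have c1 : 0 ≤ (Real.sqrt 2 - 1) * ⟪v i, v (i+2)⟫ := mul_nonneg (by linarith) (hp i)
    have c2 : 0 ≤ (Real.sqrt 2 - 1) * ⟪v (i+1), v (i+3)⟫ := mul_nonneg (by linarith) hq
    linarith [h0, c1, c2]
  have hu : ∀ i, -(ℓ^2) ≤ ⟪v i, v (i+4)⟫ := by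
    intro i
    have h0 := real_inner_self_nonneg (x := v i + v (i+4))
    rw [expand2', hn i, hn (i+4)] at h0
    linarith
  -- the closing-up condition
  have hsum' : v 0 + v 1 + v 2 + v 3 + v 4 + v 5 + v 6 + v 7 = 0 := by
    simp only [hvdef]
    rw [show ((0:ZMod 8)+1) = 1 by decide, show ((1:ZMod 8)+1) = 2 by decide,
      show ((2:ZMod 8)+1) = 3 by decide, show ((3:ZMod 8)+1) = 4 by decide,
      show ((4:ZMod 8)+1) = 5 by decide, show ((5:ZMod 8)+1) = 6 by decide,
      show ((6:ZMod 8)+1) = 7 by decide, show ((7:ZMod 8)+1) = 0 by decide]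
    abel
  have h00 : ⟪v 0 + v 1 + v 2 + v 3 + v 4 + v 5 + v 6 + v 7,
      v 0 + v 1 + v 2 + v 3 + v 4 + v 5 + v 6 + v 7⟫ = 0 := by
    rw [hsum']; simp
  rw [expand8'] at h00
  have ca01 : ⟪v 0, v 1⟫ = Real.sqrt 2/2*ℓ^2 := by
    have := hadj 0; rwa [show ((0:ZMod 8)+1) = 1 by decide] at this
  have ca12 : ⟪v 1, v 2⟫ = Real.sqrt 2/2*ℓ^2 := by
    have := hadj 1; rwa [show ((1:ZMod 8)+1) = 2 by decide] at this
  have ca23 : ⟪v 2, v 3⟫ = Real.sqrt 2/2*ℓ^2 := by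
    have := hadj 2; rwa [show ((2:ZMod 8)+1) = 3 by decide] at this
  have ca34 : ⟪v 3, v 4⟫ = Real.sqrt 2/2*ℓ^2 := by
    have := hadj 3; rwa [show ((3:ZMod 8)+1) = 4 by decide] at this
  have ca45 : ⟪v 4, v 5⟫ = Real.sqrt 2/2*ℓ^2 := by
    have := hadj 4; rwa [show ((4:ZMod 8)+1) = 5 by decide] at this
  have ca56 : ⟪v 5, v 6⟫ = Real.sqrt 2/2*ℓ^2 := by
    have := hadj 5; rwa [show ((5:ZMod 8)+1) = 6 by decide] at this
  have ca67 : ⟪v 6, v 7⟫ = Real.sqrt 2/2*ℓ^2 := by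
    have := hadj 6; rwa [show ((6:ZMod 8)+1) = 7 by decide] at this
  have ca07 : ⟪v 0, v 7⟫ = Real.sqrt 2/2*ℓ^2 := by
    rw [real_inner_comm]; have := hadj 7; rwa [show ((7:ZMod 8)+1) = 0 by decide] at this
  have q02 : 0 ≤ ⟪v 0, v 2⟫ := by
    have := hp 0; rwa [show ((0:ZMod 8)+2) = 2 by decide] at this
  have q06 : 0 ≤ ⟪v 0, v 6⟫ := by
    rw [real_inner_comm]; have := hp 6; rwa [show ((6:ZMod 8)+2) = 0 by decide] at this
  have q13 : 0 ≤ ⟪v 1, v 3⟫ := by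
    have := hp 1; rwa [show ((1:ZMod 8)+2) = 3 by decide] at this
  have q17 : 0 ≤ ⟪v 1, v 7⟫ := by
    rw [real_inner_comm]; have := hp 7; rwa [show ((7:ZMod 8)+2) = 1 by decide] at this
  have q24 : 0 ≤ ⟪v 2, v 4⟫ := by
    have := hp 2; rwa [show ((2:ZMod 8)+2) = 4 by decide] at this
  have q35 : 0 ≤ ⟪v 3, v 5⟫ := by
    have := hp 3; rwa [show ((3:ZMod 8)+2) = 5 by decide] at this
  have q46 : 0 ≤ ⟪v 4, v 6⟫ := by
    have := hp 4; rwa [show ((4:ZMod 8)+2) = 6 by decide] at this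
  have q57 : 0 ≤ ⟪v 5, v 7⟫ := by
    have := hp 5; rwa [show ((5:ZMod 8)+2) = 7 by decide] at this
  have r03 : -(Real.sqrt 2/2*ℓ^2) ≤ ⟪v 0, v 3⟫ := by
    have := hr 0; rwa [show ((0:ZMod 8)+3) = 3 by decide] at this
  have r05 : -(Real.sqrt 2/2*ℓ^2) ≤ ⟪v 0, v 5⟫ := by
    rw [real_inner_comm]; have := hr 5; rwa [show ((5:ZMod 8)+3) = 0 by decide] at this
  have r14 : -(Real.sqrt 2/2*ℓ^2) ≤ ⟪v 1, v 4⟫ := by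
    have := hr 1; rwa [show ((1:ZMod 8)+3) = 4 by decide] at this
  have r16 : -(Real.sqrt 2/2*ℓ^2) ≤ ⟪v 1, v 6⟫ := by
    rw [real_inner_comm]; have := hr 6; rwa [show ((6:ZMod 8)+3) = 1 by decide] at this
  have r25 : -(Real.sqrt 2/2*ℓ^2) ≤ ⟪v 2, v 5⟫ := by
    have := hr 2; rwa [show ((2:ZMod 8)+3) = 5 by decide] at this
  have r27 : -(Real.sqrt 2/2*ℓ^2) ≤ ⟪v 2, v 7⟫ := by
    rw [real_inner_comm]; have := hr 7; rwa [show ((7:ZMod 8)+3) = 2 by decide] at this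
  have r36 : -(Real.sqrt 2/2*ℓ^2) ≤ ⟪v 3, v 6⟫ := by
    have := hr 3; rwa [show ((3:ZMod 8)+3) = 6 by decide] at this
  have r47 : -(Real.sqrt 2/2*ℓ^2) ≤ ⟪v 4, v 7⟫ := by
    have := hr 4; rwa [show ((4:ZMod 8)+3) = 7 by decide] at this
  have u04 : -(ℓ^2) ≤ ⟪v 0, v 4⟫ := by
    have := hu 0; rwa [show ((0:ZMod 8)+4) = 4 by decide] at this
  have u15 : -(ℓ^2) ≤ ⟪v 1, v 5⟫ := by
    have := hu 1; rwa [show ((1:ZMod 8)+4) = 5 by decide] at this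
  have u26 : -(ℓ^2) ≤ ⟪v 2, v 6⟫ := by
    have := hu 2; rwa [show ((2:ZMod 8)+4) = 6 by decide] at this
  have u37 : -(ℓ^2) ≤ ⟪v 3, v 7⟫ := by
    have := hu 3; rwa [show ((3:ZMod 8)+4) = 7 by decide] at this
  have nn0 : ⟪v 0, v 0⟫ = ℓ^2 := hn 0
  have nn1 : ⟪v 1, v 1⟫ = ℓ^2 := hn 1
  have nn2 : ⟪v 2, v 2⟫ = ℓ^2 := hn 2
  have nn3 : ⟪v 3, v 3⟫ = ℓ^2 := hn 3
  have nn4 : ⟪v 4, v 4⟫ = ℓ^2 := hn 4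
  have nn5 : ⟪v 5, v 5⟫ = ℓ^2 := hn 5
  have nn6 : ⟪v 6, v 6⟫ = ℓ^2 := hn 6
  have nn7 : ⟪v 7, v 7⟫ = ℓ^2 := hn 7
  have hP02 : ⟪v 0, v 2⟫ = 0 := le_antisymm (by linarith) q02
  have hP06 : ⟪v 0, v 6⟫ = 0 := le_antisymm (by linarith) q06
  have hP13 : ⟪v 1, v 3⟫ = 0 := le_antisymm (by linarith) q13
  have hP17 : ⟪v 1, v 7⟫ = 0 := le_antisymm (by linarith) q17
  have hP24 : ⟪v 2, v 4⟫ = 0 := le_antisymm (by linarith) q24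
  have hP35 : ⟪v 3, v 5⟫ = 0 := le_antisymm (by linarith) q35
  have hP46 : ⟪v 4, v 6⟫ = 0 := le_antisymm (by linarith) q46
  have hP57 : ⟪v 5, v 7⟫ = 0 := le_antisymm (by linarith) q57
  have hw : ∀ i, ⟪v i, v (i+2)⟫ = 0 → v (i+2) = Real.sqrt 2 • v (i+1) - v i := by
    intro i h
    have h2 := hW i
    rw [h, mul_zero, inner_self_eq_zero] at h2
    have heq : v (i+2) - (Real.sqrt 2 • v (i+1) - v i)
        = v i + (-Real.sqrt 2) • v (i+1) + v (i+2) := by module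
    rw [← sub_eq_zero, heq, h2]
  have hw0 : v 2 = Real.sqrt 2 • v 1 - v 0 := by
    have := hw 0 (by rwa [show ((0:ZMod 8)+2) = 2 by decide]);
    rwa [show ((0:ZMod 8)+2) = 2 by decide, show ((0:ZMod 8)+1) = 1 by decide] at this
  have hw1 : v 3 = Real.sqrt 2 • v 2 - v 1 := by
    have := hw 1 (by rwa [show ((1:ZMod 8)+2) = 3 by decide]);
    rwa [show ((1:ZMod 8)+2) = 3 by decide, show ((1:ZMod 8)+1) = 2 by decide] at this
  have hw2 : v 4 = Real.sqrt 2 • v 3 - v 2 := by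
    have := hw 2 (by rwa [show ((2:ZMod 8)+2) = 4 by decide]);
    rwa [show ((2:ZMod 8)+2) = 4 by decide, show ((2:ZMod 8)+1) = 3 by decide] at this
  have hw3 : v 5 = Real.sqrt 2 • v 4 - v 3 := by
    have := hw 3 (by rwa [show ((3:ZMod 8)+2) = 5 by decide]);
    rwa [show ((3:ZMod 8)+2) = 5 by decide, show ((3:ZMod 8)+1) = 4 by decide] at this
  have hw4 : v 6 = Real.sqrt 2 • v 5 - v 4 := by
    have := hw 4 (by rwa [show ((4:ZMod 8)+2) = 6 by decide]);
    rwa [show ((4:ZMod 8)+2) = 6 by decide, show ((4:ZMod 8)+1) = 5 by decide] at this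
  have hw5 : v 7 = Real.sqrt 2 • v 6 - v 5 := by
    have := hw 5 (by rwa [show ((5:ZMod 8)+2) = 7 by decide]);
    rwa [show ((5:ZMod 8)+2) = 7 by decide, show ((5:ZMod 8)+1) = 6 by decide] at this
  set S : Submodule ℝ (EuclideanSpace ℝ (Fin 3)) := Submodule.span ℝ {v 0, v 1} with hSdef
  have m0 : v 0 ∈ S := Submodule.subset_span (by simp)
  have m1 : v 1 ∈ S := Submodule.subset_span (by simp)
  have m2 : v 2 ∈ S := by
    rw [hw0]; exact Submodule.sub_mem S (Submodule.smul_mem S _ m1) m0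
  have m3 : v 3 ∈ S := by
    rw [hw1]; exact Submodule.sub_mem S (Submodule.smul_mem S _ m2) m1
  have m4 : v 4 ∈ S := by
    rw [hw2]; exact Submodule.sub_mem S (Submodule.smul_mem S _ m3) m2
  have m5 : v 5 ∈ S := by
    rw [hw3]; exact Submodule.sub_mem S (Submodule.smul_mem S _ m4) m3
  have m6 : v 6 ∈ S := by
    rw [hw4]; exact Submodule.sub_mem S (Submodule.smul_mem S _ m5) m4
  have m7 : v 7 ∈ S := by
    rw [hw5]; exact Submodule.sub_mem S (Submodule.smul_mem S _ m6) m5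
  have key : ∀ k : ZMod 8, x (k+1) - x 0 = v k + (x k - x 0) := by
    intro k
    simp only [hvdef]
    abel
  have t0 : x 0 - x 0 ∈ S := by rw [sub_self]; exact Submodule.zero_mem S
  have t1 : x 1 - x 0 ∈ S := by
    have h := key 0; rw [show ((0:ZMod 8)+1) = 1 by decide] at h; rw [h]; exact S.add_mem m0 t0
  have t2 : x 2 - x 0 ∈ S := by
    have h := key 1; rw [show ((1:ZMod 8)+1) = 2 by decide] at h; rw [h]; exact S.add_mem m1 t1
  have t3 : x 3 - x 0 ∈ S := by
    have h := key 2; rw [show ((2:ZMod 8)+1) = 3 by decide] at h; rw [h]; exact S.add_mem m2 t2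
  have t4 : x 4 - x 0 ∈ S := by
    have h := key 3; rw [show ((3:ZMod 8)+1) = 4 by decide] at h; rw [h]; exact S.add_mem m3 t3
  have t5 : x 5 - x 0 ∈ S := by
    have h := key 4; rw [show ((4:ZMod 8)+1) = 5 by decide] at h; rw [h]; exact S.add_mem m4 t4
  have t6 : x 6 - x 0 ∈ S := by
    have h := key 5; rw [show ((5:ZMod 8)+1) = 6 by decide] at h; rw [h]; exact S.add_mem m5 t5
  have t7 : x 7 - x 0 ∈ S := by
    have h := key 6; rw [show ((6:ZMod 8)+1) = 7 by decide] at h; rw [h]; exact S.add_mem m6 t6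
  have hall : ∀ j : ZMod 8, j = 0 ∨ j = 1 ∨ j = 2 ∨ j = 3 ∨ j = 4 ∨ j = 5 ∨ j = 6 ∨ j = 7 := by
    decide
  have hX : ∀ i : ZMod 8, x i - x 0 ∈ S := by
    intro i
    rcases hall i with rfl|rfl|rfl|rfl|rfl|rfl|rfl|rfl <;> assumption
  have hle : vectorSpan ℝ (Set.range x) ≤ S := by
    rw [vectorSpan_def]
    apply Submodule.span_le.mpr
    rintro y ⟨a, ⟨i, rfl⟩, b, ⟨j, rfl⟩, rfl⟩
    have hy : x i -ᵥ x j = (x i - x 0) - (x j - x 0) := by rw [vsub_eq_sub]; abel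
    show x i -ᵥ x j ∈ (S : Set (EuclideanSpace ℝ (Fin 3)))
    rw [SetLike.mem_coe, hy]
    exact S.sub_mem (hX i) (hX j)
  show Module.rank ℝ (vectorSpan ℝ (Set.range x)) ≤ 2
  refine le_trans (Submodule.rank_mono hle) ?_
  refine le_trans (rank_span_le _) ?_
  refine le_trans Cardinal.mk_insert_le ?_
  rw [Cardinal.mk_singleton]
  norm_num
end

section
/- Let A be a 3×3 real orthogonal matrix with det A = 1 and let t : Fin 3 → ℝ. Then for all a, b, c, d : Fin 3 → ℝ, the torsion data of the quadruple (A.mulVec a + t, A.mulVec b + t, A.mulVec c + t, A.mulVec d + t) equals the torsion data of (a, b, c, d). (Hence the torsion angles of a configuration are invariant under the action of the special Euclidean group SE(3), and the torsion angle map descends to the configuration space.) -/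
open Matrix

lemma dot_lem_aux (A : Matrix (Fin 3) (Fin 3) ℝ) (hA : Aᵀ * A = 1) (u v : Fin 3 → ℝ) :
    A.mulVec u ⬝ᵥ A.mulVec v = u ⬝ᵥ v := by
  rw [Matrix.dotProduct_mulVec, Matrix.vecMul_mulVec, hA, Matrix.vecMul_one]

lemma cross_lem (A : Matrix (Fin 3) (Fin 3) ℝ) (hA : Aᵀ * A = 1) (hdet : A.det = 1)
    (u v : Fin 3 → ℝ) : A.mulVec u ⨯₃ A.mulVec v = A.mulVec (u ⨯₃ v) := by
  have hadj : A.adjugate = Aᵀ := by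
    have h1 : A * A.adjugate = 1 := by rw [Matrix.mul_adjugate, hdet, one_smul]
    calc A.adjugate = (Aᵀ * A) * A.adjugate := by rw [hA, one_mul]
      _ = Aᵀ * (A * A.adjugate) := by rw [mul_assoc]
      _ = Aᵀ := by rw [h1, mul_one]
  rw [Matrix.adjugate_fin_three] at hadj
  have h00 : A 1 1 * A 2 2 - A 1 2 * A 2 1 = A 0 0 := by
    simpa using congrFun (congrFun hadj 0) 0
  have h01 : -(A 1 0 * A 2 2) + A 1 2 * A 2 0 = A 0 1 := by
    simpa using congrFun (congrFun hadj 1) 0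
  have h02 : A 1 0 * A 2 1 - A 1 1 * A 2 0 = A 0 2 := by
    simpa using congrFun (congrFun hadj 2) 0
  have h10 : -(A 0 1 * A 2 2) + A 0 2 * A 2 1 = A 1 0 := by
    simpa using congrFun (congrFun hadj 0) 1
  have h11 : A 0 0 * A 2 2 - A 0 2 * A 2 0 = A 1 1 := by
    simpa using congrFun (congrFun hadj 1) 1
  have h12 : -(A 0 0 * A 2 1) + A 0 1 * A 2 0 = A 1 2 := by
    simpa using congrFun (congrFun hadj 2) 1
  have h20 : A 0 1 * A 1 2 - A 0 2 * A 1 1 = A 2 0 := by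
    simpa using congrFun (congrFun hadj 0) 2
  have h21 : -(A 0 0 * A 1 2) + A 0 2 * A 1 0 = A 2 1 := by
    simpa using congrFun (congrFun hadj 1) 2
  have h22 : A 0 0 * A 1 1 - A 0 1 * A 1 0 = A 2 2 := by
    simpa using congrFun (congrFun hadj 2) 2
  funext i
  fin_cases i
  · simp [crossProduct, Matrix.mulVec, dotProduct, Fin.sum_univ_three]
    linear_combination (u 1 * v 2 - u 2 * v 1) * h00 + (u 2 * v 0 - u 0 * v 2) * h01 +
      (u 0 * v 1 - u 1 * v 0) * h02
  · simp [crossProduct, Matrix.mulVec, dotProduct, Fin.sum_univ_three]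
    linear_combination (u 1 * v 2 - u 2 * v 1) * h10 + (u 2 * v 0 - u 0 * v 2) * h11 +
      (u 0 * v 1 - u 1 * v 0) * h12
  · simp [crossProduct, Matrix.mulVec, dotProduct, Fin.sum_univ_three]
    linear_combination (u 1 * v 2 - u 2 * v 1) * h20 + (u 2 * v 0 - u 0 * v 2) * h21 +
      (u 0 * v 1 - u 1 * v 0) * h22

/-- The torsion data of a quadruple `(a, b, c, d)` of points in `ℝ³`:
the pair `(⟪m₁, m₂⟫, ⟪m₁ ×₃ m₂, e₂⟫)` where `e₁ = b - a`, `e₂ = c - b`, `e₃ = d - c`,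
`m₁ = e₁ ×₃ e₂` and `m₂ = e₂ ×₃ e₃`. -/
def torsionData (a b c d : Fin 3 → ℝ) : ℝ × ℝ :=
  let e₁ := b - a
  let e₂ := c - b
  let e₃ := d - c
  let m₁ := e₁ ⨯₃ e₂
  let m₂ := e₂ ⨯₃ e₃
  (m₁ ⬝ᵥ m₂, (m₁ ⨯₃ m₂) ⬝ᵥ e₂)

theorem torsionData_invariant_under_SE3
    (A : Matrix (Fin 3) (Fin 3) ℝ) (hA : Aᵀ * A = 1) (hdet : A.det = 1)
    (t : Fin 3 → ℝ) (a b c d : Fin 3 → ℝ) :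
    torsionData (A.mulVec a + t) (A.mulVec b + t) (A.mulVec c + t) (A.mulVec d + t) =
      torsionData a b c d := by
  have hsub : ∀ x y : Fin 3 → ℝ, (A.mulVec x + t) - (A.mulVec y + t) = A.mulVec (x - y) := by
    intro x y
    rw [Matrix.mulVec_sub]
    abel
  simp only [torsionData, hsub, cross_lem A hA hdet, dot_lem_aux A hA]
end

section
/- Let ℓ > 0 and φ ∈ (0, π), and let x, y : ZMod 8 → EuclideanSpace ℝ (Fin 3) be two realizations of the cyclooctane linkage with edge length ℓ and bond angle φ. If for every i ∈ ZMod 8 the torsion data of the quadruple (x (i-1), x i, x (i+1), x (i+2)) equals the torsion data of (y (i-1), y i, y (i+1), y (i+2)), then there exists an orientation-preserving affine isometry equivalence f of EuclideanSpace ℝ (Fin 3) with y i = f (x i) for every i. (Hence two configurations of the cyclooctane linkage agree if and only if all their torsion angles do, so the torsion angle sequence determines the equivalence class in the configuration space.) -/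
open Real EuclideanGeometry Matrix

/-- The torsion data sequence of a configuration `x : ZMod 8 → EuclideanSpace ℝ (Fin 3)`,
identifying `EuclideanSpace ℝ (Fin 3)` with `Fin 3 → ℝ`. -/
def torsionSeq (x : ZMod 8 → EuclideanSpace ℝ (Fin 3)) (i : ZMod 8) : ℝ × ℝ :=
  torsionData (WithLp.equiv 2 (Fin 3 → ℝ) (x (i - 1))) (WithLp.equiv 2 (Fin 3 → ℝ) (x i))
    (WithLp.equiv 2 (Fin 3 → ℝ) (x (i + 1))) (WithLp.equiv 2 (Fin 3 → ℝ) (x (i + 2)))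

/-! ### Auxiliary vector identities in `ℝ³` -/

private lemma cyclo_bac_cab (w a b : Fin 3 → ℝ) :
    w ⨯₃ (a ⨯₃ b) = (w ⬝ᵥ b) • a - (w ⬝ᵥ a) • b := by
  simp_rw [cross_apply, vec3_dotProduct]
  funext i
  fin_cases i <;> simp <;> ring

private lemma cyclo_snd_eq (a b c : Fin 3 → ℝ) :
    ((a ⨯₃ b) ⨯₃ (b ⨯₃ c)) ⬝ᵥ b = (b ⬝ᵥ b) * ((a ⨯₃ b) ⬝ᵥ c) := by
  simp_rw [cross_apply, vec3_dotProduct]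
  norm_num [Matrix.cons_val_two, Matrix.tail_cons, Matrix.head_cons]
  ring

private lemma cyclo_det_cross (a b : Fin 3 → ℝ) :
    Matrix.det ![a, b, a ⨯₃ b] = (a ⨯₃ b) ⬝ᵥ (a ⨯₃ b) := by
  rw [← triple_product_eq_det]
  simp_rw [cross_apply, vec3_dotProduct]
  norm_num [Matrix.cons_val_two, Matrix.tail_cons, Matrix.head_cons]
  ring

private lemma cyclo_determination (e₁ e₂ e₃ e₃' : Fin 3 → ℝ) (hm : e₁ ⨯₃ e₂ ≠ 0)
    (h1 : e₁ ⬝ᵥ e₃ = e₁ ⬝ᵥ e₃') (h2 : e₂ ⬝ᵥ e₃ = e₂ ⬝ᵥ e₃')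
    (h3 : (e₁ ⨯₃ e₂) ⬝ᵥ e₃ = (e₁ ⨯₃ e₂) ⬝ᵥ e₃') : e₃ = e₃' := by
  set w := e₃ - e₃' with hw
  have hw1 : w ⬝ᵥ e₁ = 0 := by
    rw [hw, sub_dotProduct, dotProduct_comm, dotProduct_comm e₃', ← h1, sub_self]
  have hw2 : w ⬝ᵥ e₂ = 0 := by
    rw [hw, sub_dotProduct, dotProduct_comm, dotProduct_comm e₃', ← h2, sub_self]
  have hwm : w ⬝ᵥ (e₁ ⨯₃ e₂) = 0 := by
    rw [hw, sub_dotProduct, dotProduct_comm, dotProduct_comm e₃', ← h3, sub_self]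
  have hcross : w ⨯₃ (e₁ ⨯₃ e₂) = 0 := by
    rw [cyclo_bac_cab, hw1, hw2, zero_smul, zero_smul, sub_zero]
  have hL : (w ⨯₃ (e₁ ⨯₃ e₂)) ⬝ᵥ (w ⨯₃ (e₁ ⨯₃ e₂)) =
      (w ⬝ᵥ w) * ((e₁ ⨯₃ e₂) ⬝ᵥ (e₁ ⨯₃ e₂)) - (w ⬝ᵥ (e₁ ⨯₃ e₂)) * ((e₁ ⨯₃ e₂) ⬝ᵥ w) :=
    cross_dot_cross w (e₁ ⨯₃ e₂) w (e₁ ⨯₃ e₂)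
  rw [hcross, zero_dotProduct, hwm, zero_mul, sub_zero] at hL
  have hmm : (e₁ ⨯₃ e₂) ⬝ᵥ (e₁ ⨯₃ e₂) ≠ 0 := fun hc => hm (dotProduct_self_eq_zero.mp hc)
  have hww : w ⬝ᵥ w = 0 := by
    rcases mul_eq_zero.mp hL.symm with h | h
    · exact h
    · exact absurd h hmm
  exact sub_eq_zero.mp (dotProduct_self_eq_zero.mp hww)

private lemma cyclo_triple_map (g : (Fin 3 → ℝ) →ₗ[ℝ] (Fin 3 → ℝ)) (a b c : Fin 3 → ℝ) :
    g a ⬝ᵥ (g b ⨯₃ g c) = LinearMap.det g * (a ⬝ᵥ (b ⨯₃ c)) := by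
  have hg : ∀ v : Fin 3 → ℝ, g v = (LinearMap.toMatrix' g).mulVec v := by
    intro v
    rw [← Matrix.toLin'_apply, Matrix.toLin'_toMatrix']
  rw [triple_product_eq_det, triple_product_eq_det, ← LinearMap.det_toMatrix' g,
    ← Matrix.det_transpose (LinearMap.toMatrix' g), mul_comm, ← Matrix.det_mul (M := ![a, b, c])]
  congr 1
  ext i j
  change ![g a, g b, g c] i j = (Matrix.of ![a, b, c] * (LinearMap.toMatrix' g)ᵀ) i j
  rw [Matrix.mul_apply]
  have hrow : ![g a, g b, g c] i = g (![a, b, c] i) := by fin_cases i <;> rfl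
  rw [hrow, hg]
  simp [Matrix.mulVec, dotProduct, Matrix.transpose_apply, mul_comm]

private lemma cyclo_li (a b c : Fin 3 → ℝ) (h : Matrix.det ![a, b, c] ≠ 0) :
    LinearIndependent ℝ ![a, b, c] := by
  have h2 : IsUnit (Matrix.of ![a, b, c]) := by
    rw [Matrix.isUnit_iff_isUnit_det]
    exact isUnit_iff_ne_zero.mpr h
  exact (Matrix.linearIndependent_rows_iff_isUnit (K := ℝ) (A := Matrix.of ![a, b, c])).mpr h2

/-! ### Bridging `EuclideanSpace` and `Fin 3 → ℝ` -/

private lemma cyclo_dot_inner (a b : EuclideanSpace ℝ (Fin 3)) :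
    (WithLp.equiv 2 (Fin 3 → ℝ) a) ⬝ᵥ (WithLp.equiv 2 (Fin 3 → ℝ) b) = inner ℝ a b := by
  simp [dotProduct, PiLp.inner_apply, RCLike.inner_apply, mul_comm]

private lemma cyclo_equiv_sub (a b : EuclideanSpace ℝ (Fin 3)) :
    WithLp.equiv 2 (Fin 3 → ℝ) (a - b) =
      WithLp.equiv 2 (Fin 3 → ℝ) a - WithLp.equiv 2 (Fin 3 → ℝ) b := by
  simp

/-- The `i`-th edge vector of a configuration, as an element of `Fin 3 → ℝ`. -/
private def cvec (x : ZMod 8 → EuclideanSpace ℝ (Fin 3)) (i : ZMod 8) : Fin 3 → ℝ :=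
  WithLp.equiv 2 (Fin 3 → ℝ) (x (i + 1)) - WithLp.equiv 2 (Fin 3 → ℝ) (x i)

private lemma cvec_eq (x : ZMod 8 → EuclideanSpace ℝ (Fin 3)) (i : ZMod 8) :
    cvec x i = WithLp.equiv 2 (Fin 3 → ℝ) (x (i + 1) - x i) :=
  (cyclo_equiv_sub _ _).symm

private lemma torsionSeq_eq (x : ZMod 8 → EuclideanSpace ℝ (Fin 3)) (i : ZMod 8) :
    torsionSeq x i =
      ((cvec x (i - 1) ⨯₃ cvec x i) ⬝ᵥ (cvec x i ⨯₃ cvec x (i + 1)),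
        ((cvec x (i - 1) ⨯₃ cvec x i) ⨯₃ (cvec x i ⨯₃ cvec x (i + 1))) ⬝ᵥ cvec x i) := by
  have h1 : i - 1 + 1 = i := by ring
  have h2 : i + 1 + 1 = i + 2 := by ring
  simp only [torsionSeq, torsionData, cvec, h1, h2]

private lemma cyclo_dot_self {ℓ φ : ℝ} {x : ZMod 8 → EuclideanSpace ℝ (Fin 3)}
    (hx : IsCyclooctaneRealization ℓ φ x) (i : ZMod 8) :
    cvec x i ⬝ᵥ cvec x i = ℓ ^ 2 := by
  rw [cvec_eq, cyclo_dot_inner, real_inner_self_eq_norm_sq, ← dist_eq_norm,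
    dist_comm, hx.1 i]

private lemma cyclo_dot_adj {ℓ φ : ℝ} {x : ZMod 8 → EuclideanSpace ℝ (Fin 3)} (hℓ : 0 < ℓ)
    (hx : IsCyclooctaneRealization ℓ φ x) (i : ZMod 8) :
    cvec x i ⬝ᵥ cvec x (i + 1) = -(ℓ ^ 2 * Real.cos φ) := by
  have ha := hx.2 (i + 1)
  have h1 : i + 1 - 1 = i := by ring
  have h2 : i + 1 + 1 = i + 2 := by ring
  rw [h1, h2] at ha
  have hn1 : ‖x i - x (i + 1)‖ = ℓ := by rw [← dist_eq_norm, hx.1 i]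
  have hn2 : ‖x (i + 2) - x (i + 1)‖ = ℓ := by
    rw [← dist_eq_norm, dist_comm, ← h2, hx.1 (i + 1)]
  have hcos := InnerProductGeometry.cos_angle (x i - x (i + 1)) (x (i + 2) - x (i + 1))
  rw [show InnerProductGeometry.angle (x i - x (i + 1)) (x (i + 2) - x (i + 1)) =
      ∠ (x i) (x (i + 1)) (x (i + 2)) from rfl, ha, hn1, hn2] at hcos
  have hne : (ℓ * ℓ : ℝ) ≠ 0 := by positivity
  have hinner : inner ℝ (x i - x (i + 1)) (x (i + 2) - x (i + 1)) = ℓ ^ 2 * Real.cos φ := by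
    have h' := (div_eq_iff hne).mp hcos.symm
    rw [h']; ring
  rw [cvec_eq, cvec_eq, h2, cyclo_dot_inner]
  have : x (i + 1) - x i = -(x i - x (i + 1)) := by abel
  rw [this, inner_neg_left, hinner]

private lemma cyclo_cross_dot {ℓ φ : ℝ} {x : ZMod 8 → EuclideanSpace ℝ (Fin 3)} (hℓ : 0 < ℓ)
    (hx : IsCyclooctaneRealization ℓ φ x) (i : ZMod 8) :
    (cvec x i ⨯₃ cvec x (i + 1)) ⬝ᵥ (cvec x i ⨯₃ cvec x (i + 1)) =
      ℓ ^ 2 * ℓ ^ 2 - (ℓ ^ 2 * Real.cos φ) ^ 2 := by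
  rw [cross_dot_cross, cyclo_dot_self hx, cyclo_dot_self hx, cyclo_dot_adj hℓ hx,
    dotProduct_comm, cyclo_dot_adj hℓ hx]
  ring

private lemma cyclo_disc_pos {ℓ φ : ℝ} (hℓ : 0 < ℓ) (hφ : φ ∈ Set.Ioo 0 π) :
    0 < ℓ ^ 2 * ℓ ^ 2 - (ℓ ^ 2 * Real.cos φ) ^ 2 := by
  have hs : 0 < Real.sin φ := Real.sin_pos_of_pos_of_lt_pi hφ.1 hφ.2
  have hsc := Real.sin_sq_add_cos_sq φ
  have key : ℓ ^ 2 * ℓ ^ 2 - (ℓ ^ 2 * Real.cos φ) ^ 2 = ℓ ^ 2 * ℓ ^ 2 * Real.sin φ ^ 2 := by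
    linear_combination (-(ℓ ^ 2 * ℓ ^ 2)) * hsc
  have pos : 0 < ℓ ^ 2 * ℓ ^ 2 * Real.sin φ ^ 2 := by positivity
  linarith

private lemma cyclo_cross_ne {ℓ φ : ℝ} {x : ZMod 8 → EuclideanSpace ℝ (Fin 3)} (hℓ : 0 < ℓ)
    (hφ : φ ∈ Set.Ioo 0 π) (hx : IsCyclooctaneRealization ℓ φ x) (i : ZMod 8) :
    cvec x i ⨯₃ cvec x (i + 1) ≠ 0 := by
  intro hc
  have := cyclo_cross_dot hℓ hx i
  rw [hc, zero_dotProduct] at this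
  exact absurd this.symm (ne_of_gt (cyclo_disc_pos hℓ hφ))

private noncomputable abbrev Qe := WithLp.equiv 2 (Fin 3 → ℝ)
private noncomputable abbrev Le := WithLp.linearEquiv 2 ℝ (Fin 3 → ℝ)

theorem cyclooctaneRealization_congr_of_torsionSeq_eq
    (ℓ φ : ℝ) (hℓ : 0 < ℓ) (hφ : φ ∈ Set.Ioo 0 π)
    (x y : ZMod 8 → EuclideanSpace ℝ (Fin 3))
    (hx : IsCyclooctaneRealization ℓ φ x)
    (hy : IsCyclooctaneRealization ℓ φ y)
    (h : ∀ i : ZMod 8, torsionSeq x i = torsionSeq y i) :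
    ∃ f : EuclideanSpace ℝ (Fin 3) ≃ᵃⁱ[ℝ] EuclideanSpace ℝ (Fin 3),
      OrientationPreserving f ∧ ∀ i : ZMod 8, y i = f (x i) := by
  classical
  -- basic Gram data
  have hxs := cyclo_dot_self hx
  have hys := cyclo_dot_self hy
  have hxa := cyclo_dot_adj hℓ hx
  have hya := cyclo_dot_adj hℓ hy
  have hxc := cyclo_cross_dot hℓ hx
  have hyc := cyclo_cross_dot hℓ hy
  have hdisc := cyclo_disc_pos hℓ hφ
  have hl2 : (ℓ : ℝ) ^ 2 ≠ 0 := by positivity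
  -- torsion consequences
  have hd13 : ∀ i : ZMod 8, cvec x (i - 1) ⬝ᵥ cvec x (i + 1) = cvec y (i - 1) ⬝ᵥ cvec y (i + 1) := by
    intro i
    have hi : (i - 1) + 1 = i := by ring
    have hfst := congrArg Prod.fst (h i)
    rw [torsionSeq_eq, torsionSeq_eq] at hfst
    simp only at hfst
    rw [cross_dot_cross, cross_dot_cross] at hfst
    have hx12 : cvec x (i - 1) ⬝ᵥ cvec x i = -(ℓ ^ 2 * Real.cos φ) := by
      have := hxa (i - 1); rwa [hi] at this
    have hy12 : cvec y (i - 1) ⬝ᵥ cvec y i = -(ℓ ^ 2 * Real.cos φ) := by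
      have := hya (i - 1); rwa [hi] at this
    rw [hx12, hy12, hxa i, hya i, hxs i, hys i] at hfst
    have h' : cvec x (i - 1) ⬝ᵥ cvec x (i + 1) * ℓ ^ 2 =
        cvec y (i - 1) ⬝ᵥ cvec y (i + 1) * ℓ ^ 2 := by linarith
    exact mul_right_cancel₀ hl2 h'
  have htrip : ∀ i : ZMod 8,
      (cvec x (i - 1) ⨯₃ cvec x i) ⬝ᵥ cvec x (i + 1) =
        (cvec y (i - 1) ⨯₃ cvec y i) ⬝ᵥ cvec y (i + 1) := by
    intro i
    have hsnd := congrArg Prod.snd (h i)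
    rw [torsionSeq_eq, torsionSeq_eq] at hsnd
    simp only at hsnd
    rw [cyclo_snd_eq, cyclo_snd_eq, hxs i, hys i] at hsnd
    exact mul_left_cancel₀ hl2 hsnd
  -- the frames
  set ux : Fin 3 → (Fin 3 → ℝ) := ![cvec x 0, cvec x 1, cvec x 0 ⨯₃ cvec x 1] with hux
  set uy : Fin 3 → (Fin 3 → ℝ) := ![cvec y 0, cvec y 1, cvec y 0 ⨯₃ cvec y 1] with huy
  have h01x : cvec x 0 ⬝ᵥ cvec x 1 = -(ℓ ^ 2 * Real.cos φ) := hxa 0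
  have h01y : cvec y 0 ⬝ᵥ cvec y 1 = -(ℓ ^ 2 * Real.cos φ) := hya 0
  have hxc0 : (cvec x 0 ⨯₃ cvec x 1) ⬝ᵥ (cvec x 0 ⨯₃ cvec x 1) =
      ℓ ^ 2 * ℓ ^ 2 - (ℓ ^ 2 * Real.cos φ) ^ 2 := hxc 0
  have hyc0 : (cvec y 0 ⨯₃ cvec y 1) ⬝ᵥ (cvec y 0 ⨯₃ cvec y 1) =
      ℓ ^ 2 * ℓ ^ 2 - (ℓ ^ 2 * Real.cos φ) ^ 2 := hyc 0
  have hgram : ∀ i j : Fin 3, ux i ⬝ᵥ ux j = uy i ⬝ᵥ uy j := by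
    intro i j
    fin_cases i <;> fin_cases j
    · show cvec x 0 ⬝ᵥ cvec x 0 = cvec y 0 ⬝ᵥ cvec y 0
      rw [hxs 0, hys 0]
    · show cvec x 0 ⬝ᵥ cvec x 1 = cvec y 0 ⬝ᵥ cvec y 1
      rw [h01x, h01y]
    · show cvec x 0 ⬝ᵥ (cvec x 0 ⨯₃ cvec x 1) = cvec y 0 ⬝ᵥ (cvec y 0 ⨯₃ cvec y 1)
      rw [dot_self_cross, dot_self_cross]
    · show cvec x 1 ⬝ᵥ cvec x 0 = cvec y 1 ⬝ᵥ cvec y 0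
      rw [dotProduct_comm, h01x, dotProduct_comm, h01y]
    · show cvec x 1 ⬝ᵥ cvec x 1 = cvec y 1 ⬝ᵥ cvec y 1
      rw [hxs 1, hys 1]
    · show cvec x 1 ⬝ᵥ (cvec x 0 ⨯₃ cvec x 1) = cvec y 1 ⬝ᵥ (cvec y 0 ⨯₃ cvec y 1)
      rw [dot_cross_self, dot_cross_self]
    · show (cvec x 0 ⨯₃ cvec x 1) ⬝ᵥ cvec x 0 = (cvec y 0 ⨯₃ cvec y 1) ⬝ᵥ cvec y 0
      rw [dotProduct_comm, dot_self_cross, dotProduct_comm, dot_self_cross]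
    · show (cvec x 0 ⨯₃ cvec x 1) ⬝ᵥ cvec x 1 = (cvec y 0 ⨯₃ cvec y 1) ⬝ᵥ cvec y 1
      rw [dotProduct_comm, dot_cross_self, dotProduct_comm, dot_cross_self]
    · show (cvec x 0 ⨯₃ cvec x 1) ⬝ᵥ (cvec x 0 ⨯₃ cvec x 1) =
        (cvec y 0 ⨯₃ cvec y 1) ⬝ᵥ (cvec y 0 ⨯₃ cvec y 1)
      rw [hxc0, hyc0]
  -- linear independence
  have hlix : LinearIndependent ℝ ux := by
    rw [hux]
    apply cyclo_li
    rw [cyclo_det_cross, hxc0]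
    exact ne_of_gt hdisc
  have heqvQ : ∀ p : EuclideanSpace ℝ (Fin 3), Le p = Qe p := fun p => rfl
  set uE : Fin 3 → EuclideanSpace ℝ (Fin 3) := fun i => Le.symm (ux i) with huE
  set vE : Fin 3 → EuclideanSpace ℝ (Fin 3) := fun i => Le.symm (uy i) with hvE
  have hliE : LinearIndependent ℝ uE := by
    have := hlix.map' Le.symm.toLinearMap (LinearEquiv.ker _)
    exact this
  have hcard : Fintype.card (Fin 3) = Module.finrank ℝ (EuclideanSpace ℝ (Fin 3)) := by
    simp [finrank_euclideanSpace_fin]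
  set bu : Module.Basis (Fin 3) ℝ (EuclideanSpace ℝ (Fin 3)) :=
    basisOfLinearIndependentOfCardEqFinrank hliE hcard with hbu
  have hbuc : ∀ i, bu i = uE i := fun i => by
    rw [hbu, coe_basisOfLinearIndependentOfCardEqFinrank]
  set T : EuclideanSpace ℝ (Fin 3) →ₗ[ℝ] EuclideanSpace ℝ (Fin 3) := bu.constr ℝ vE with hT
  have hTu : ∀ i, T (uE i) = vE i := by
    intro i
    rw [← hbuc i, hT]
    exact bu.constr_basis ℝ vE i
  -- inner product preservation
  have hgramE : ∀ i j, inner ℝ (vE i) (vE j) = inner ℝ (uE i) (uE j) := by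
    intro i j
    rw [← cyclo_dot_inner, ← cyclo_dot_inner]
    have hs : ∀ w : Fin 3 → ℝ, Qe (Le.symm w) = w := fun w => rfl
    rw [huE, hvE]
    simp only [hs]
    exact (hgram i j).symm
  have hinner : ∀ p q : EuclideanSpace ℝ (Fin 3), inner ℝ (T p) (T q) = inner ℝ p q := by
    have hbil : ((innerₗ (EuclideanSpace ℝ (Fin 3))).compl₁₂ T T :
        EuclideanSpace ℝ (Fin 3) →ₗ[ℝ] EuclideanSpace ℝ (Fin 3) →ₗ[ℝ] ℝ) =
          innerₗ (EuclideanSpace ℝ (Fin 3)) := by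
      apply LinearMap.ext_basis bu bu
      intro i j
      simp only [LinearMap.compl₁₂_apply, innerₗ_apply_apply]
      rw [hbuc i, hbuc j, hTu i, hTu j]
      exact hgramE i j
    intro p q
    have := DFunLike.congr_fun (DFunLike.congr_fun hbil p) q
    simpa only [LinearMap.compl₁₂_apply, innerₗ_apply_apply] using this
  set TI : EuclideanSpace ℝ (Fin 3) →ₗᵢ[ℝ] EuclideanSpace ℝ (Fin 3) :=
    T.isometryOfInner hinner with hTI
  set Teq : EuclideanSpace ℝ (Fin 3) ≃ₗᵢ[ℝ] EuclideanSpace ℝ (Fin 3) :=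
    TI.toLinearIsometryEquiv rfl with hTeq
  have hTeqT : ∀ p : EuclideanSpace ℝ (Fin 3), Teq p = T p := fun p => rfl
  -- the conjugated map on plain vectors
  set Tf : (Fin 3 → ℝ) →ₗ[ℝ] (Fin 3 → ℝ) :=
    (Le.toLinearMap.comp T).comp Le.symm.toLinearMap with hTf
  have hTfu : ∀ w : Fin 3 → ℝ, Tf w = Le (T (Le.symm w)) := fun w => rfl
  have hTfdet : LinearMap.det Tf = LinearMap.det T := by
    rw [hTf]
    exact LinearMap.det_conj T Le
  have hTfdot : ∀ a b : Fin 3 → ℝ, Tf a ⬝ᵥ Tf b = a ⬝ᵥ b := by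
    intro a b
    rw [hTfu, hTfu]
    have hs : ∀ w : Fin 3 → ℝ, Qe (Le.symm w) = w := fun w => rfl
    calc Le (T (Le.symm a)) ⬝ᵥ Le (T (Le.symm b))
        = Qe (T (Le.symm a)) ⬝ᵥ Qe (T (Le.symm b)) := rfl
      _ = inner ℝ (T (Le.symm a)) (T (Le.symm b)) := cyclo_dot_inner _ _
      _ = inner ℝ (Le.symm a) (Le.symm b) := hinner _ _
      _ = Qe (Le.symm a) ⬝ᵥ Qe (Le.symm b) := (cyclo_dot_inner _ _).symm
      _ = a ⬝ᵥ b := by rw [hs, hs]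
  have hTfux : ∀ i : Fin 3, Tf (ux i) = uy i := by
    intro i
    rw [hTfu]
    have h1 : Le.symm (ux i) = uE i := rfl
    rw [h1, hTu i, hvE]
    exact Le.apply_symm_apply (uy i)
  -- determinant one
  have hdet : LinearMap.det T = 1 := by
    have h3 := cyclo_triple_map Tf (ux 2) (ux 0) (ux 1)
    rw [hTfux 2, hTfux 0, hTfux 1] at h3
    have hx3 : ux 2 ⬝ᵥ (ux 0 ⨯₃ ux 1) = ℓ ^ 2 * ℓ ^ 2 - (ℓ ^ 2 * Real.cos φ) ^ 2 := by
      show (cvec x 0 ⨯₃ cvec x 1) ⬝ᵥ (cvec x 0 ⨯₃ cvec x 1) = _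
      exact hxc0
    have hy3 : uy 2 ⬝ᵥ (uy 0 ⨯₃ uy 1) = ℓ ^ 2 * ℓ ^ 2 - (ℓ ^ 2 * Real.cos φ) ^ 2 := by
      show (cvec y 0 ⨯₃ cvec y 1) ⬝ᵥ (cvec y 0 ⨯₃ cvec y 1) = _
      exact hyc0
    rw [hx3, hy3, hTfdet] at h3
    have h' : LinearMap.det T * (ℓ ^ 2 * ℓ ^ 2 - (ℓ ^ 2 * Real.cos φ) ^ 2) =
        1 * (ℓ ^ 2 * ℓ ^ 2 - (ℓ ^ 2 * Real.cos φ) ^ 2) := by linarith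
    exact mul_right_cancel₀ (ne_of_gt hdisc) h'
  have hTfdet1 : LinearMap.det Tf = 1 := by rw [hTfdet, hdet]
  -- the affine isometry
  set f : EuclideanSpace ℝ (Fin 3) ≃ᵃⁱ[ℝ] EuclideanSpace ℝ (Fin 3) :=
    AffineIsometryEquiv.mk' (fun p => Teq (p - x 0) + y 0) Teq (x 0)
    (by
      intro p'
      simp only [vsub_eq_sub, vadd_eq_add, sub_self, map_zero, zero_add]) with hf
  have hfapp : ∀ p : EuclideanSpace ℝ (Fin 3), f p = Teq (p - x 0) + y 0 := fun p => rfl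
  have hf0 : f (x 0) = y 0 := by rw [hfapp, sub_self, map_zero, zero_add]
  -- f moves edges by Tf (in coordinates)
  have hfvec : ∀ p q : EuclideanSpace ℝ (Fin 3), Qe (f p) - Qe (f q) = Tf (Qe p - Qe q) := by
    intro p q
    have h1 : f p - f q = Teq (p - q) := by
      rw [hfapp, hfapp]
      have h2 : Teq (p - x 0) + y 0 - (Teq (q - x 0) + y 0)
          = Teq (p - x 0) - Teq (q - x 0) := by abel
      rw [h2, ← map_sub]
      congr 1
      abel
    calc Qe (f p) - Qe (f q) = Qe (f p - f q) := (cyclo_equiv_sub _ _).symm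
      _ = Qe (Teq (p - q)) := by rw [h1]
      _ = Tf (Qe p - Qe q) := rfl
  have hQvec : ∀ i : ZMod 8, Qe (f (x (i + 1))) - Qe (f (x i)) = Tf (cvec x i) := by
    intro i
    rw [hfvec]
    rfl
  -- base cases
  have hf1 : f (x 1) = y 1 := by
    have h1 := hQvec 0
    rw [hf0] at h1
    have h2 : Tf (cvec x 0) = cvec y 0 := hTfux 0
    rw [h2] at h1
    have h3 : Qe (f (x (0 + 1))) - Qe (y 0) = Qe (y (0 + 1)) - Qe (y 0) := h1
    have h4 := Qe.injective (sub_left_inj.mp h3)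
    have e1 : (0 : ZMod 8) + 1 = 1 := by decide
    rwa [e1] at h4
  have hf2 : f (x 2) = y 2 := by
    have h1 := hQvec 1
    rw [hf1] at h1
    have h2 : Tf (cvec x 1) = cvec y 1 := hTfux 1
    rw [h2] at h1
    have h3 : Qe (f (x (1 + 1))) - Qe (y 1) = Qe (y (1 + 1)) - Qe (y 1) := h1
    have h4 := Qe.injective (sub_left_inj.mp h3)
    have e1 : (1 : ZMod 8) + 1 = 2 := by decide
    rwa [e1] at h4
  -- induction step
  have step : ∀ i : ZMod 8, f (x (i - 1)) = y (i - 1) → f (x i) = y i →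
      f (x (i + 1)) = y (i + 1) → f (x (i + 2)) = y (i + 2) := by
    intro i hm1 h0 hp1
    have hi : (i - 1) + 1 = i := by ring
    have hi2 : (i + 1) + 1 = i + 2 := by ring
    have he1 : Tf (cvec x (i - 1)) = cvec y (i - 1) := by
      have h' := hQvec (i - 1)
      rw [hi, h0, hm1] at h'
      rw [← h', cvec, hi]
    have he2 : Tf (cvec x i) = cvec y i := by
      have h' := hQvec i
      rw [hp1, h0] at h'
      rw [← h', cvec]
    have he3' : Tf (cvec x (i + 1)) = Qe (f (x (i + 2))) - Qe (y (i + 1)) := by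
      have h' := hQvec (i + 1)
      rw [hi2, hp1] at h'
      rw [← h']
    -- the three dot-product equalities
    have hR2 : cvec y i ⬝ᵥ (Qe (f (x (i + 2))) - Qe (y (i + 1)))
        = cvec x i ⬝ᵥ cvec x (i + 1) := by
      rw [← he2, ← he3', hTfdot]
    have h2 : cvec y i ⬝ᵥ cvec y (i + 1) = cvec y i ⬝ᵥ (Qe (f (x (i + 2))) - Qe (y (i + 1))) :=
      (hya i).trans ((hxa i).symm.trans hR2.symm)
    have hR1 : cvec y (i - 1) ⬝ᵥ (Qe (f (x (i + 2))) - Qe (y (i + 1)))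
        = cvec x (i - 1) ⬝ᵥ cvec x (i + 1) := by
      rw [← he1, ← he3', hTfdot]
    have h1 : cvec y (i - 1) ⬝ᵥ cvec y (i + 1)
        = cvec y (i - 1) ⬝ᵥ (Qe (f (x (i + 2))) - Qe (y (i + 1))) :=
      (hd13 i).symm.trans hR1.symm
    have hR3 : (cvec y (i - 1) ⨯₃ cvec y i) ⬝ᵥ (Qe (f (x (i + 2))) - Qe (y (i + 1)))
        = (cvec x (i - 1) ⨯₃ cvec x i) ⬝ᵥ cvec x (i + 1) := by
      rw [← he1, ← he2, ← he3']
      calc (Tf (cvec x (i - 1)) ⨯₃ Tf (cvec x i)) ⬝ᵥ Tf (cvec x (i + 1))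
          = Tf (cvec x (i + 1)) ⬝ᵥ (Tf (cvec x (i - 1)) ⨯₃ Tf (cvec x i)) :=
            dotProduct_comm _ _
        _ = LinearMap.det Tf * (cvec x (i + 1) ⬝ᵥ (cvec x (i - 1) ⨯₃ cvec x i)) :=
            cyclo_triple_map Tf _ _ _
        _ = cvec x (i + 1) ⬝ᵥ (cvec x (i - 1) ⨯₃ cvec x i) := by rw [hTfdet1, one_mul]
        _ = (cvec x (i - 1) ⨯₃ cvec x i) ⬝ᵥ cvec x (i + 1) := dotProduct_comm _ _
    have h3 : (cvec y (i - 1) ⨯₃ cvec y i) ⬝ᵥ cvec y (i + 1)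
        = (cvec y (i - 1) ⨯₃ cvec y i) ⬝ᵥ (Qe (f (x (i + 2))) - Qe (y (i + 1))) :=
      (htrip i).symm.trans hR3.symm
    have hm : cvec y (i - 1) ⨯₃ cvec y i ≠ 0 := by
      have := cyclo_cross_ne hℓ hφ hy (i - 1)
      rwa [hi] at this
    have he : cvec y (i + 1) = Qe (f (x (i + 2))) - Qe (y (i + 1)) :=
      cyclo_determination _ _ _ _ hm h1 h2 h3
    have h2' : Qe (y (i + 2)) - Qe (y (i + 1)) = Qe (f (x (i + 2))) - Qe (y (i + 1)) := by
      rw [← he, cvec, hi2]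
    exact (Qe.injective (sub_left_inj.mp h2'.symm))
  -- propagate around the ring
  have hf3 : f (x 3) = y 3 := by
    have := step 1 (by norm_num [show (1 : ZMod 8) - 1 = 0 by decide, hf0]) hf1
      (by norm_num [show (1 : ZMod 8) + 1 = 2 by decide, hf2])
    simpa [show (1 : ZMod 8) + 2 = 3 by decide] using this
  have hf4 : f (x 4) = y 4 := by
    have := step 2 (by norm_num [show (2 : ZMod 8) - 1 = 1 by decide, hf1]) hf2
      (by norm_num [show (2 : ZMod 8) + 1 = 3 by decide, hf3])
    simpa [show (2 : ZMod 8) + 2 = 4 by decide] using this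
  have hf5 : f (x 5) = y 5 := by
    have := step 3 (by norm_num [show (3 : ZMod 8) - 1 = 2 by decide, hf2]) hf3
      (by norm_num [show (3 : ZMod 8) + 1 = 4 by decide, hf4])
    simpa [show (3 : ZMod 8) + 2 = 5 by decide] using this
  have hf6 : f (x 6) = y 6 := by
    have := step 4 (by norm_num [show (4 : ZMod 8) - 1 = 3 by decide, hf3]) hf4
      (by norm_num [show (4 : ZMod 8) + 1 = 5 by decide, hf5])
    simpa [show (4 : ZMod 8) + 2 = 6 by decide] using this
  have hf7 : f (x 7) = y 7 := by
    have := step 5 (by norm_num [show (5 : ZMod 8) - 1 = 4 by decide, hf4]) hf5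
      (by norm_num [show (5 : ZMod 8) + 1 = 6 by decide, hf6])
    simpa [show (5 : ZMod 8) + 2 = 7 by decide] using this
  -- orientation preservation
  have horient : OrientationPreserving f := by
    unfold OrientationPreserving
    have hlin : f.linearIsometryEquiv = Teq := by
      rw [hf]
      exact AffineIsometryEquiv.linearIsometryEquiv_mk' _ _ _ _
    rw [hlin]
    have : Teq.toLinearEquiv.toLinearMap = T := by
      ext p
      rfl
    rw [this, hdet]
  refine ⟨f, horient, ?_⟩
  intro i
  have hall : ∀ j : Fin 8, y ((j : ℕ) : ZMod 8) = f (x ((j : ℕ) : ZMod 8)) := by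
    intro j
    fin_cases j
    · exact hf0.symm
    · exact hf1.symm
    · exact hf2.symm
    · exact hf3.symm
    · exact hf4.symm
    · exact hf5.symm
    · exact hf6.symm
    · exact hf7.symm
  have hi : ((i.val : ℕ) : ZMod 8) = i := ZMod.natCast_rightInverse i
  have := hall ⟨i.val, ZMod.val_lt i⟩
  simpa [hi] using this
end
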